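/- arXiv:1509.05097 — 9 statements merged into one kernel-verified Lean document; each statement's English description precedes it below -/
import Mathlib

section
/- Let α : ℝ → ℝ be measurable, odd (α(−s) = −α(s)), integrable, and compactly supported, with first moment α₁ := ∫_ℝ s·α(s) ds satisfying α₁ > 0, and set |α|₂ := ∫_ℝ s²·|α(s)| ds. For ε > 0 set α_ε(s) := α(s/ε)/(ε²·α₁) and D_{α,ε}ψ(t) := ∫_ℝ α_ε(s−t)·ψ(s) ds. Then for every twice continuously differentiable ψ : ℝ → ℝ whose second derivative is bounded, for every ε > 0 and every t ∈ ℝ: |D_{α,ε}ψ(t) − ψ′(t)| ≤ (|α|₂/(2·α₁))·ε·(sup_{x∈ℝ} |ψ″(x)|). -/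
open MeasureTheory Real Set Filter

private lemma abs_int_abs (c : ℝ) : |(∫ u in (0:ℝ)..c, |u|)| = c ^ 2 / 2 := by
  rcases le_or_gt 0 c with h | h
  · rw [intervalIntegral.integral_congr (g := fun u => u)
      (fun u hu => abs_of_nonneg (by rw [uIcc_of_le h] at hu; exact hu.1)),
      integral_id]
    rw [show ((c:ℝ) ^ 2 - 0 ^ 2) / 2 = c ^ 2 / 2 by ring, abs_of_nonneg (by positivity)]
  · rw [intervalIntegral.integral_congr (g := fun u => -u)
      (fun u hu => abs_of_nonpos (by rw [uIcc_of_ge h.le] at hu; exact hu.2)),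
      intervalIntegral.integral_neg, integral_id, abs_neg,
      show ((c:ℝ) ^ 2 - 0 ^ 2) / 2 = c ^ 2 / 2 by ring, abs_of_nonneg (by positivity)]

private lemma taylor2 {f : ℝ → ℝ} (hf : ContDiff ℝ 2 f) {M : ℝ}
    (hM : ∀ x, |deriv (deriv f) x| ≤ M) (a b : ℝ) :
    |f b - f a - (b - a) * deriv f a| ≤ M / 2 * (b - a) ^ 2 := by
  have h2 : ContDiff ℝ (1 + 1) f := by norm_num; exact hf
  rw [contDiff_succ_iff_deriv] at h2
  obtain ⟨hd1, -, h1⟩ := h2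
  rw [contDiff_one_iff_deriv] at h1
  obtain ⟨hd2, hc2⟩ := h1
  have hcont1 : Continuous (deriv f) := hd2.continuous
  have hMnn : 0 ≤ M := le_trans (abs_nonneg _) (hM 0)
  have hlip : ∀ x y : ℝ, |deriv f y - deriv f x| ≤ M * |y - x| := by
    intro x y
    have := Convex.norm_image_sub_le_of_norm_deriv_le (f := deriv f)
      (fun z _ => hd2 z) (fun z _ => by simpa [Real.norm_eq_abs] using hM z)
      convex_univ (mem_univ x) (mem_univ y)
    simpa [Real.norm_eq_abs] using this
  have hftc : f b - f a = ∫ x in a..b, deriv f x :=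
    (intervalIntegral.integral_deriv_eq_sub (fun x _ => hd1 x)
      (hcont1.intervalIntegrable a b)).symm
  have key : f b - f a - (b - a) * deriv f a
      = ∫ x in a..b, (deriv f x - deriv f a) := by
    rw [intervalIntegral.integral_sub (hcont1.intervalIntegrable a b)
      intervalIntegrable_const, ← hftc, intervalIntegral.integral_const, smul_eq_mul]
  rw [key, ← Real.norm_eq_abs]
  have hb : ‖∫ x in a..b, (deriv f x - deriv f a)‖ ≤ |(∫ x in a..b, M * |x - a|)| := by
    apply intervalIntegral.norm_integral_le_abs_of_norm_le
    · exact Eventually.of_forall fun x => by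
        simpa [Real.norm_eq_abs] using hlip a x
    · exact ((continuous_const.mul ((continuous_id.sub continuous_const).abs)) :
        Continuous fun x : ℝ => M * |x - a|).intervalIntegrable a b
  refine hb.trans_eq ?_
  rw [intervalIntegral.integral_const_mul,
    intervalIntegral.integral_comp_sub_right (fun u => |u|) a, sub_self,
    abs_mul, abs_of_nonneg hMnn, abs_int_abs]
  ring

/-- quantitative strong convergence of the nonlocal derivative on
twice continuously differentiable functions with bounded second derivative. -/
theorem stmt_0 (α : ℝ → ℝ) (hmeas : Measurable α)
    (hodd : ∀ s, α (-s) = -α s)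
    (hint : Integrable α) (hsupp : HasCompactSupport α)
    (α₁ : ℝ) (hα₁ : α₁ = ∫ s, s * α s) (hα₁pos : 0 < α₁)
    (αabs2 : ℝ) (hαabs2 : αabs2 = ∫ s, s ^ 2 * |α s|)
    (ψ : ℝ → ℝ) (hψ : ContDiff ℝ 2 ψ)
    (hbdd : BddAbove (Set.range fun x => |deriv (deriv ψ) x|))
    (ε : ℝ) (hε : 0 < ε) (t : ℝ) :
    |(∫ s, α ((s - t) / ε) / (ε ^ 2 * α₁) * ψ s) - deriv ψ t| ≤
      (αabs2 / (2 * α₁)) * ε * (⨆ x, |deriv (deriv ψ) x|) := by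
  set M := ⨆ x, |deriv (deriv ψ) x| with hMdef
  have hM : ∀ x, |deriv (deriv ψ) x| ≤ M := fun x => le_ciSup hbdd x
  have hMnn : 0 ≤ M := le_trans (abs_nonneg _) (hM 0)
  obtain ⟨R, hRpos, hR⟩ := hsupp.exists_pos_le_norm
  have hαabs : Integrable (fun u => |α u|) := hint.abs
  have hψc : Continuous ψ := hψ.continuous
  -- integrability of u * α u
  have hint1 : Integrable (fun u : ℝ => u * α u) := by
    refine (hαabs.const_mul R).mono'
      ((measurable_id.mul hmeas).aestronglyMeasurable)
      (Eventually.of_forall fun u => ?_)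
    rcases le_or_gt R ‖u‖ with h | h
    · rw [hR u h]; simp [mul_nonneg hRpos.le (abs_nonneg (α u))]
    · rw [Real.norm_eq_abs, abs_mul]
      exact mul_le_mul_of_nonneg_right (by simpa [Real.norm_eq_abs] using h.le)
        (abs_nonneg _)
  -- integrability of u^2 * |α u|
  have hint2 : Integrable (fun u : ℝ => u ^ 2 * |α u|) := by
    refine (hαabs.const_mul (R ^ 2)).mono'
      (((measurable_id.pow_const 2).mul hmeas.abs).aestronglyMeasurable)
      (Eventually.of_forall fun u => ?_)
    rcases le_or_gt R ‖u‖ with h | h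
    · rw [hR u h]; simpa using mul_nonneg (sq_nonneg R) (abs_nonneg (α u))
    · rw [Real.norm_eq_abs] at h
      rw [Real.norm_eq_abs, abs_mul, abs_of_nonneg (sq_nonneg u), abs_abs]
      refine mul_le_mul_of_nonneg_right ?_ (abs_nonneg _)
      calc u ^ 2 = |u| ^ 2 := (sq_abs u).symm
        _ ≤ R ^ 2 := by gcongr
  -- integrability of α u * ψ (t + ε u)
  have hintψ : Integrable (fun u : ℝ => α u * ψ (t + ε * u)) := by
    obtain ⟨C, hC⟩ := (isCompact_Icc (a := -R) (b := R)).exists_bound_of_continuousOn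
      (f := fun u => ψ (t + ε * u))
      ((hψc.comp (continuous_const.add (continuous_const.mul continuous_id))).continuousOn)
    have hC0 : 0 ≤ C := le_trans (norm_nonneg _)
      (hC 0 ⟨by linarith, hRpos.le⟩)
    refine (hαabs.const_mul C).mono' ((hmeas.mul
      ((hψc.measurable).comp (measurable_const.add
        (measurable_const.mul measurable_id)))).aestronglyMeasurable)
      (Eventually.of_forall fun u => ?_)
    rcases le_or_gt R ‖u‖ with h | h
    · rw [hR u h]; simp [mul_nonneg hC0 (abs_nonneg (α u))]
    · rw [Real.norm_eq_abs] at h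
      rw [Real.norm_eq_abs, abs_mul, mul_comm]
      refine mul_le_mul_of_nonneg_right ?_ (abs_nonneg _)
      simpa [Real.norm_eq_abs] using hC u ⟨by linarith [abs_le.1 h.le], (abs_le.1 h.le).2⟩
  -- ∫ α = 0 by oddness
  have h0 : (∫ s, α s) = 0 := by
    have h1 : (∫ s, α (-s)) = ∫ s, α s := integral_neg_eq_self α volume
    simp_rw [hodd] at h1
    rw [integral_neg] at h1
    linarith
  -- change of variables
  set J := ∫ u, α u * ψ (t + ε * u) with hJdef
  have hA : (∫ s, α ((s - t) / ε) * ψ s) = ε * J := by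
    have h1 : (∫ s, α ((s - t) / ε) * ψ s)
        = ∫ x, α (x / ε) * ψ (x + t) := by
      rw [← integral_sub_right_eq_self (fun x => α (x / ε) * ψ (x + t)) t]
      congr 1; funext s; rw [sub_add_cancel]
    have h2 := MeasureTheory.Measure.integral_comp_mul_left
      (fun x => α (x / ε) * ψ (x + t)) ε
    have h3 : (∫ x : ℝ, α ((ε * x) / ε) * ψ (ε * x + t)) = J := by
      congr 1; funext x
      rw [mul_div_cancel_left₀ _ hε.ne', add_comm]
    rw [h1]
    rw [h3, smul_eq_mul, abs_of_pos (inv_pos.2 hε)] at h2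
    field_simp at h2
    linarith [h2]
  -- Taylor remainder identity
  have hJ' : J - ε * α₁ * deriv ψ t
      = ∫ u, α u * (ψ (t + ε * u) - ψ t - ε * u * deriv ψ t) := by
    have e1 : (fun u => α u * (ψ (t + ε * u) - ψ t - ε * u * deriv ψ t))
        = fun u => α u * ψ (t + ε * u) - ψ t * α u
            - (ε * deriv ψ t) * (u * α u) := by funext u; ring
    have i1 : Integrable (fun u : ℝ => α u * ψ (t + ε * u) - ψ t * α u) :=
      hintψ.sub (hint.const_mul (ψ t))
    have i2 : Integrable (fun u : ℝ => (ε * deriv ψ t) * (u * α u)) :=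
      hint1.const_mul _
    rw [e1, integral_sub i1 i2, integral_sub hintψ (hint.const_mul (ψ t)),
      integral_const_mul, integral_const_mul, h0, ← hα₁]
    ring
  -- bound the remainder integral
  have hr : ∀ u : ℝ, |ψ (t + ε * u) - ψ t - ε * u * deriv ψ t|
      ≤ M / 2 * (ε * u) ^ 2 := by
    intro u
    have := taylor2 hψ hM t (t + ε * u)
    simpa using this
  have hαabs2nn : 0 ≤ αabs2 := by
    rw [hαabs2]
    exact integral_nonneg fun u => mul_nonneg (sq_nonneg u) (abs_nonneg _)
  have hbound : |∫ u, α u * (ψ (t + ε * u) - ψ t - ε * u * deriv ψ t)|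
      ≤ M * ε ^ 2 / 2 * αabs2 := by
    calc |∫ u, α u * (ψ (t + ε * u) - ψ t - ε * u * deriv ψ t)|
        ≤ ∫ u, ‖α u * (ψ (t + ε * u) - ψ t - ε * u * deriv ψ t)‖ := by
          rw [← Real.norm_eq_abs]
          exact norm_integral_le_integral_norm _
      _ ≤ ∫ u, (M * ε ^ 2 / 2) * (u ^ 2 * |α u|) := by
          have ir : Integrable
              (fun u : ℝ => α u * (ψ (t + ε * u) - ψ t - ε * u * deriv ψ t)) := by
            have e2 : (fun u : ℝ => α u * (ψ (t + ε * u) - ψ t - ε * u * deriv ψ t))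
                = fun u => α u * ψ (t + ε * u) - ψ t * α u
                    - (ε * deriv ψ t) * (u * α u) := by funext u; ring
            rw [e2]
            exact (hintψ.sub (hint.const_mul (ψ t))).sub (hint1.const_mul _)
          refine integral_mono ir.norm (hint2.const_mul _) ?_
          intro u
          simp only [Real.norm_eq_abs, abs_mul]
          calc |α u| * |ψ (t + ε * u) - ψ t - ε * u * deriv ψ t|
              ≤ |α u| * (M / 2 * (ε * u) ^ 2) :=
                mul_le_mul_of_nonneg_left (hr u) (abs_nonneg _)
            _ = (M * ε ^ 2 / 2) * (u ^ 2 * |α u|) := by ring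
      _ = M * ε ^ 2 / 2 * αabs2 := by
          rw [integral_const_mul, ← hαabs2]
  -- assemble
  have hrw : (∫ s, α ((s - t) / ε) / (ε ^ 2 * α₁) * ψ s)
      = (∫ s, α ((s - t) / ε) * ψ s) / (ε ^ 2 * α₁) := by
    rw [← integral_div]; congr 1; funext s; ring
  rw [hrw, hA]
  have hc : ε * J / (ε ^ 2 * α₁) - deriv ψ t
      = (J - ε * α₁ * deriv ψ t) / (ε * α₁) := by
    field_simp
  rw [hc, abs_div, abs_of_pos (by positivity : (0:ℝ) < ε * α₁),
    div_le_iff₀ (by positivity : (0:ℝ) < ε * α₁)]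
  calc |J - ε * α₁ * deriv ψ t| = |∫ u, α u * (ψ (t + ε * u) - ψ t - ε * u * deriv ψ t)| := by
        rw [hJ']
    _ ≤ M * ε ^ 2 / 2 * αabs2 := hbound
    _ = αabs2 / (2 * α₁) * ε * M * (ε * α₁) := by field_simp
end

section
/- Let α : ℝ → ℝ be measurable, odd, and integrable, with α₁ := ∫_ℝ s·α(s) ds > 0, and suppose there is a constant A > 0 such that ∫_ℝ |s^j·α(s)| ds ≤ A·j! for every integer j ≥ 1. Then there exists δ > 0 such that for every ε > 0 and every ξ with 0 < |ξ| ≤ δ/ε, one has S_ε(ξ) ≠ 0. Consequently, every nonzero real zero of S_ε has absolute value greater than δ/ε, and thus tends to infinity as ε → 0⁺. -/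
open MeasureTheory Real Set Filter

/-- zero-spreading lemma.  Under an analyticity-type moment bound,
the nonzero real zeros of the Fourier-sine symbol `S_ε` all have absolute value
larger than `δ / ε`, hence escape to infinity as `ε → 0⁺`. -/
theorem stmt_4 (α : ℝ → ℝ) (hmeas : Measurable α) (hodd : ∀ s, α (-s) = -α s)
    (hint : Integrable α)
    (α₁ : ℝ) (hα₁ : α₁ = ∫ s, s * α s) (hα₁pos : 0 < α₁)
    (A : ℝ) (hA : 0 < A)
    (hmom : ∀ j : ℕ, 1 ≤ j → ∫ s, |s ^ j * α s| ≤ A * (Nat.factorial j)) :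
    ∃ δ > (0:ℝ), ∀ ε > (0:ℝ), ∀ ξ : ℝ, ξ ≠ 0 → |ξ| ≤ δ / ε →
      (2 * ∫ t in Set.Ioi (0:ℝ), Real.sin (2 * π * ξ * t) * (α (t / ε) / (ε ^ 2 * α₁))) ≠ 0 := by
  have hπ : (0:ℝ) < π := Real.pi_pos
  -- `s * α s` is integrable, otherwise `α₁ = 0`
  have hInt1 : Integrable (fun s : ℝ => s * α s) := by
    by_contra h
    rw [hα₁, integral_undef h] at hα₁pos
    exact lt_irrefl 0 hα₁pos
  -- half-line first moment
  have heven : ∀ x : ℝ, |x| * α |x| = x * α x := by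
    intro x
    rcases abs_choice x with h | h
    · rw [h]
    · rw [h, hodd]; ring
  have hhalf : (∫ s in Ioi (0:ℝ), 2 * π * s * α s) = π * α₁ := by
    have h2 : (∫ x : ℝ, x * α x) = 2 * ∫ x in Ioi (0:ℝ), x * α x := by
      rw [← integral_comp_abs (f := fun x => x * α x)]
      exact integral_congr_ae (Filter.Eventually.of_forall fun x => (heven x).symm)
    have h3 : (∫ s in Ioi (0:ℝ), 2 * π * s * α s)
        = (2 * π) * ∫ s in Ioi (0:ℝ), s * α s := by
      rw [← integral_const_mul]
      exact integral_congr_ae (Filter.Eventually.of_forall fun x => by ring)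
    rw [h3, hα₁, h2]; ring
  -- the normalized integral G
  set G : ℝ → ℝ := fun η => ∫ s in Ioi (0:ℝ), (Real.sin (2 * π * η * s) / η) * α s with hGdef
  have hG : Tendsto G (nhdsWithin (0:ℝ) {(0:ℝ)}ᶜ) (nhds (π * α₁)) := by
    rw [← hhalf]
    apply tendsto_integral_filter_of_dominated_convergence
        (fun s => 2 * π * ‖s * α s‖)
    · exact Filter.Eventually.of_forall fun η =>
        (((measurable_const.mul measurable_id).sin.div_const η).mul hmeas).aestronglyMeasurable
    · refine Filter.Eventually.of_forall fun η => ?_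
      refine ae_restrict_of_forall_mem measurableSet_Ioi fun s hs => ?_
      have hs0 : 0 < s := hs
      rcases eq_or_ne η 0 with rfl | hη
      · simp [norm_mul, abs_mul]
        positivity
      · have h1 : |Real.sin (2 * π * η * s) / η| ≤ 2 * π * s := by
          rw [abs_div]
          rw [div_le_iff₀ (abs_pos.mpr hη)]
          calc |Real.sin (2 * π * η * s)| ≤ |2 * π * η * s| := Real.abs_sin_le_abs
            _ = 2 * π * s * |η| := by
                rw [abs_mul, abs_mul, abs_mul]
                rw [abs_of_pos (by norm_num : (0:ℝ) < 2), abs_of_pos hπ, abs_of_pos hs0]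
                ring
        calc ‖Real.sin (2 * π * η * s) / η * α s‖
            = |Real.sin (2 * π * η * s) / η| * |α s| := by
              rw [Real.norm_eq_abs, abs_mul]
          _ ≤ (2 * π * s) * |α s| := by
              apply mul_le_mul_of_nonneg_right h1 (abs_nonneg _)
          _ = 2 * π * ‖s * α s‖ := by
              rw [Real.norm_eq_abs, abs_mul, abs_of_pos hs0]; ring
    · exact (hInt1.norm.const_mul (2 * π)).restrict
    · refine ae_restrict_of_forall_mem measurableSet_Ioi fun s _ => ?_
      have hd : HasDerivAt (fun η : ℝ => Real.sin (2 * π * η * s)) (2 * π * s) 0 := by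
        have h2 : HasDerivAt (fun η : ℝ => 2 * π * η * s) (2 * π * s) 0 := by
          simpa using ((hasDerivAt_id (0:ℝ)).const_mul (2 * π)).mul_const s
        have := (Real.hasDerivAt_sin (2 * π * 0 * s)).comp 0 h2
        simpa [Function.comp_def] using this
      have hslope := hasDerivAt_iff_tendsto_slope.mp hd
      have hEq : slope (fun η : ℝ => Real.sin (2 * π * η * s)) 0
          = fun η : ℝ => Real.sin (2 * π * η * s) / η := by
        funext η
        simp [slope_def_field, div_eq_inv_mul]
      rw [hEq] at hslope
      exact hslope.mul_const (α s)
  -- G is eventually positive near 0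
  have hpos : ∀ᶠ η in nhdsWithin (0:ℝ) {(0:ℝ)}ᶜ, 0 < G η :=
    hG.eventually (eventually_gt_nhds (by positivity))
  obtain ⟨δ, hδpos, hδ⟩ := Metric.mem_nhdsWithin_iff.mp hpos
  refine ⟨δ / 2, by positivity, fun ε hε ξ hξ hξle => ?_⟩
  set η := ε * ξ with hη
  have hηne : η ≠ 0 := mul_ne_zero (ne_of_gt hε) hξ
  have hηlt : |η| < δ := by
    have : |η| = ε * |ξ| := by rw [hη, abs_mul, abs_of_pos hε]
    rw [this]
    calc ε * |ξ| ≤ ε * (δ / 2 / ε) := by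
          apply mul_le_mul_of_nonneg_left hξle (le_of_lt hε)
      _ = δ / 2 := by field_simp
      _ < δ := by linarith
  have hGη : 0 < G η := hδ ⟨by simpa [Metric.mem_ball, Real.dist_eq] using hηlt, hηne⟩
  -- change of variables: the target integral equals η * G η / (ε * α₁)
  have hsub : (∫ t in Set.Ioi (0:ℝ), Real.sin (2 * π * ξ * t) * (α (t / ε) / (ε ^ 2 * α₁)))
      = η * G η / (ε * α₁) := by
    have hstep1 : (∫ t in Set.Ioi (0:ℝ), Real.sin (2 * π * ξ * t) * (α (t / ε) / (ε ^ 2 * α₁)))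
        = (ε ^ 2 * α₁)⁻¹ * ∫ t in Set.Ioi (0:ℝ),
            (fun u => Real.sin (2 * π * η * u) * α u) (ε⁻¹ * t) := by
      rw [← integral_const_mul]
      refine setIntegral_congr_fun measurableSet_Ioi fun t _ => ?_
      have h1 : 2 * π * η * (ε⁻¹ * t) = 2 * π * ξ * t := by
        rw [hη]; field_simp
      simp only [h1]
      rw [div_eq_inv_mul, div_eq_inv_mul]
      ring
    rw [hstep1, integral_comp_mul_left_Ioi (fun u => Real.sin (2 * π * η * u) * α u) 0
      (inv_pos.mpr hε)]
    have hFη : (∫ u in Ioi ((ε:ℝ)⁻¹ * 0), Real.sin (2 * π * η * u) * α u) = η * G η := by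
      rw [mul_zero, hGdef, ← integral_const_mul]
      refine setIntegral_congr_fun measurableSet_Ioi fun u _ => ?_
      field_simp
    rw [hFη]
    rw [smul_eq_mul, inv_inv]
    field_simp
  rw [hsub]
  have : η * G η / (ε * α₁) ≠ 0 := by
    apply div_ne_zero (mul_ne_zero hηne (ne_of_gt hGη))
    exact mul_ne_zero (ne_of_gt hε) (ne_of_gt hα₁pos)
  intro hcon
  apply this
  linarith [hcon]
end

section
/- Fix ε > 0 and let α_ε(s) := sgn(s)·e^{−|s|/ε}/(2ε²) (the rescaling of the odd kernel α(s) = sgn(s)·e^{−|s|}, which has first moment α₁ = 2). Let F(t) := 1/(1+t²) and u_ε(t) := arctan(t) + 2ε²·t/(1+t²)². Then for every t ∈ ℝ: ∫_ℝ α_ε(s−t)·u_ε(s) ds = F(t); that is, u_ε is a nonlocal antiderivative of F, solving D_{α,ε}u_ε = F. -/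
open MeasureTheory Real Set Filter
open scoped Topology

set_option maxHeartbeats 1000000

private lemma exp_mul_integrableOn_Iic {b : ℝ} (hb : 0 < b) (a : ℝ) :
    IntegrableOn (fun x : ℝ => Real.exp (b * x)) (Iic a) := by
  rw [← (Measure.measurePreserving_neg (volume : Measure ℝ)).integrableOn_comp_preimage
      (Homeomorph.neg ℝ).measurableEmbedding]
  have : (Neg.neg : ℝ → ℝ) ⁻¹' (Iic a) = Ici (-a) := by ext x; simp [neg_le]
  rw [this, integrableOn_Ici_iff_integrableOn_Ioi]
  simpa [Function.comp_def, mul_neg, neg_mul] using exp_neg_integrableOn_Ioi (-a) hb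

private lemma measurable_realSign : Measurable Real.sign := by
  have : Real.sign = fun r : ℝ => if r < 0 then (-1 : ℝ) else if 0 < r then 1 else 0 :=
    funext fun r => rfl
  rw [this]
  exact Measurable.ite measurableSet_Iio measurable_const
    (Measurable.ite measurableSet_Ioi measurable_const measurable_const)

private lemma ubound (ε s : ℝ) :
    |Real.arctan s + 2 * ε ^ 2 * s / (1 + s ^ 2) ^ 2| ≤ π / 2 + ε ^ 2 := by
  have h1 : |Real.arctan s| ≤ π / 2 := by
    rw [abs_le]
    exact ⟨(Real.neg_pi_div_two_lt_arctan s).le, (Real.arctan_lt_pi_div_two s).le⟩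
  have hd : (0:ℝ) < (1 + s ^ 2) ^ 2 := by positivity
  have h2 : |2 * ε ^ 2 * s / (1 + s ^ 2) ^ 2| ≤ ε ^ 2 := by
    rw [abs_div, abs_of_pos hd, div_le_iff₀ hd]
    have : |2 * ε ^ 2 * s| = 2 * ε ^ 2 * |s| := by
      rw [abs_mul, abs_of_nonneg (by positivity : (0:ℝ) ≤ 2 * ε ^ 2)]
    rw [this]
    nlinarith [abs_nonneg s, sq_abs s, sq_nonneg (|s| - 1), sq_nonneg s, sq_nonneg (ε * s),
      sq_nonneg (ε ^ 2 * s ^ 2)]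
  calc |Real.arctan s + 2 * ε ^ 2 * s / (1 + s ^ 2) ^ 2|
      ≤ |Real.arctan s| + |2 * ε ^ 2 * s / (1 + s ^ 2) ^ 2| := abs_add_le _ _
    _ ≤ π / 2 + ε ^ 2 := add_le_add h1 h2

private lemma hderiv_p {ε : ℝ} (hε : ε ≠ 0) (t s : ℝ) :
    HasDerivAt (fun s => -ε * (Real.exp (-(s - t) / ε) * (Real.arctan s + ε / (1 + s ^ 2))) / (2 * ε ^ 2))
      ((Real.exp (-(s - t) / ε) * (Real.arctan s + 2 * ε ^ 2 * s / (1 + s ^ 2) ^ 2)) / (2 * ε ^ 2)) s := by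
  have hd : (1 : ℝ) + s ^ 2 ≠ 0 := by positivity
  have h1 : HasDerivAt (fun s : ℝ => Real.exp (-(s - t) / ε)) (Real.exp (-(s - t) / ε) * (-1 / ε)) s := by
    have : HasDerivAt (fun s : ℝ => -(s - t) / ε) (-1 / ε) s :=
      (((hasDerivAt_id s).sub_const t).neg).div_const ε
    exact this.exp
  have h2 := (Real.hasDerivAt_arctan s).add
    ((hasDerivAt_const s ε).div ((hasDerivAt_pow 2 s).const_add 1) hd)
  have := ((h1.mul h2).const_mul (-ε)).div_const (2 * ε ^ 2)
  refine this.congr_deriv ?_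
  simp only [Pi.add_apply, Pi.sub_apply, Pi.div_apply]
  field_simp
  ring

private lemma hderiv_m {ε : ℝ} (hε : ε ≠ 0) (t s : ℝ) :
    HasDerivAt (fun s => -ε * (Real.exp ((s - t) / ε) * (Real.arctan s - ε / (1 + s ^ 2))) / (2 * ε ^ 2))
      ((-(Real.exp ((s - t) / ε)) * (Real.arctan s + 2 * ε ^ 2 * s / (1 + s ^ 2) ^ 2)) / (2 * ε ^ 2)) s := by
  have hd : (1 : ℝ) + s ^ 2 ≠ 0 := by positivity
  have h1 : HasDerivAt (fun s : ℝ => Real.exp ((s - t) / ε)) (Real.exp ((s - t) / ε) * (1 / ε)) s := by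
    have : HasDerivAt (fun s : ℝ => (s - t) / ε) (1 / ε) s :=
      ((hasDerivAt_id s).sub_const t).div_const ε
    exact this.exp
  have h2 := (Real.hasDerivAt_arctan s).sub
    ((hasDerivAt_const s ε).div ((hasDerivAt_pow 2 s).const_add 1) hd)
  have := ((h1.mul h2).const_mul (-ε)).div_const (2 * ε ^ 2)
  refine this.congr_deriv ?_
  simp only [Pi.add_apply, Pi.sub_apply, Pi.div_apply]
  field_simp
  ring

/-- for the exponential kernel `α_ε(s) = sgn(s) e^{-|s|/ε}/(2ε²)`,
the function `u_ε(t) = arctan t + 2ε² t/(1+t²)²` is a nonlocal antiderivative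
of `F(t) = 1/(1+t²)`. -/
theorem stmt_7 (ε : ℝ) (hε : 0 < ε) (t : ℝ) :
    ∫ s, (Real.sign (s - t) * Real.exp (-|s - t| / ε) / (2 * ε ^ 2)) *
      (Real.arctan s + 2 * ε ^ 2 * s / (1 + s ^ 2) ^ 2) = 1 / (1 + t ^ 2) := by
  have hε' : ε ≠ 0 := hε.ne'
  set g : ℝ → ℝ := fun s => (Real.sign (s - t) * Real.exp (-|s - t| / ε) / (2 * ε ^ 2)) *
      (Real.arctan s + 2 * ε ^ 2 * s / (1 + s ^ 2) ^ 2) with hg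
  have hu_cont : Continuous (fun s : ℝ => Real.arctan s + 2 * ε ^ 2 * s / (1 + s ^ 2) ^ 2) := by
    apply Real.continuous_arctan.add
    exact (continuous_const.mul continuous_id).div
      ((continuous_const.add (continuous_pow 2)).pow 2) (fun s => by positivity)
  have hg_meas : AEStronglyMeasurable g volume := by
    refine Measurable.aestronglyMeasurable ?_
    exact (((measurable_realSign.comp (measurable_id.sub_const t)).mul
      (((measurable_id.sub_const t).abs.neg.div_const ε).exp)).div_const (2 * ε ^ 2)).mul
      hu_cont.measurable
  have key : ∀ s : ℝ, ‖g s‖ ≤ (π / 2 + ε ^ 2) / (2 * ε ^ 2) * Real.exp (-|s - t| / ε) := by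
    intro s
    have hsign : |Real.sign (s - t)| ≤ 1 := by
      rcases Real.sign_apply_eq (s - t) with h | h | h <;> simp [h]
    have h2e : (0:ℝ) < 2 * ε ^ 2 := by positivity
    have hub := ubound ε s
    rw [Real.norm_eq_abs, hg]
    simp only
    rw [abs_mul, abs_div, abs_mul, abs_of_pos (Real.exp_pos _), abs_of_pos h2e]
    calc |Real.sign (s - t)| * Real.exp (-|s - t| / ε) / (2 * ε ^ 2) *
          |Real.arctan s + 2 * ε ^ 2 * s / (1 + s ^ 2) ^ 2|
        ≤ 1 * Real.exp (-|s - t| / ε) / (2 * ε ^ 2) * (π / 2 + ε ^ 2) := by gcongr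
      _ = (π / 2 + ε ^ 2) / (2 * ε ^ 2) * Real.exp (-|s - t| / ε) := by ring
  have hIoiInt : IntegrableOn g (Ioi t) := by
    refine Integrable.mono'
      ((exp_neg_integrableOn_Ioi t (show (0:ℝ) < 1/ε by positivity)).const_mul
        ((π / 2 + ε ^ 2) / (2 * ε ^ 2) * Real.exp (t / ε))) hg_meas.restrict ?_
    filter_upwards [ae_restrict_mem measurableSet_Ioi] with s hs
    have hst : t < s := hs
    have habs : |s - t| = s - t := abs_of_pos (by linarith)
    calc ‖g s‖ ≤ (π / 2 + ε ^ 2) / (2 * ε ^ 2) * Real.exp (-|s - t| / ε) := key s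
      _ = (π / 2 + ε ^ 2) / (2 * ε ^ 2) * Real.exp (t / ε) * Real.exp (-(1/ε) * s) := by
          rw [habs, mul_assoc, ← Real.exp_add]
          ring_nf
  have hIicInt : IntegrableOn g (Iic t) := by
    refine Integrable.mono'
      ((exp_mul_integrableOn_Iic (show (0:ℝ) < 1/ε by positivity) t).const_mul
        ((π / 2 + ε ^ 2) / (2 * ε ^ 2) * Real.exp (-t / ε))) hg_meas.restrict ?_
    filter_upwards [ae_restrict_mem measurableSet_Iic] with s hs
    have hst : s ≤ t := hs
    have habs : |s - t| = t - s := by rw [abs_sub_comm]; exact abs_of_nonneg (by linarith)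
    calc ‖g s‖ ≤ (π / 2 + ε ^ 2) / (2 * ε ^ 2) * Real.exp (-|s - t| / ε) := key s
      _ = (π / 2 + ε ^ 2) / (2 * ε ^ 2) * Real.exp (-t / ε) * Real.exp ((1/ε) * s) := by
          rw [habs, mul_assoc, ← Real.exp_add]
          ring_nf
  have hsplit : ∫ s, g s = (∫ s in Iic t, g s) + ∫ s in Ioi t, g s := by
    rw [← setIntegral_univ, ← Iic_union_Ioi (a := t),
      setIntegral_union (Iic_disjoint_Ioi le_rfl) measurableSet_Ioi hIicInt hIoiInt]
  have hIoi_eq : EqOn g (fun s => (Real.exp (-(s - t) / ε) *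
      (Real.arctan s + 2 * ε ^ 2 * s / (1 + s ^ 2) ^ 2)) / (2 * ε ^ 2)) (Ioi t) := by
    intro s hs
    have hst : t < s := hs
    have habs : |s - t| = s - t := abs_of_pos (by linarith)
    rw [hg]
    simp only
    rw [habs, Real.sign_of_pos (by linarith : (0:ℝ) < s - t)]
    ring
  have hIoiVal : ∫ s in Ioi t, g s =
      0 - (-ε * (Real.exp (-(t - t) / ε) * (Real.arctan t + ε / (1 + t ^ 2))) / (2 * ε ^ 2)) := by
    rw [setIntegral_congr_fun measurableSet_Ioi hIoi_eq]
    refine integral_Ioi_of_hasDerivAt_of_tendsto' (fun x _ => hderiv_p hε' t x)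
      ((hIoiInt.congr_fun hIoi_eq measurableSet_Ioi)) ?_
    have h1 : Tendsto (fun s : ℝ => Real.exp (-(s - t) / ε)) atTop (𝓝 0) := by
      apply Real.tendsto_exp_atBot.comp
      apply Tendsto.atBot_div_const hε
      have h : Tendsto (fun s : ℝ => s - t) atTop atTop := by
        simpa [sub_eq_add_neg] using
          tendsto_atTop_add_const_right atTop (-t) (tendsto_id (α := ℝ))
      exact tendsto_neg_atTop_atBot.comp h
    have hsq : Tendsto (fun s : ℝ => 1 + s ^ 2) atTop atTop :=
      tendsto_atTop_add_const_left atTop 1 (tendsto_pow_atTop two_ne_zero)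
    have h2 : Tendsto (fun s : ℝ => Real.arctan s + ε / (1 + s ^ 2)) atTop (𝓝 (π / 2 + 0)) :=
      (Real.tendsto_arctan_atTop.mono_right nhdsWithin_le_nhds).add
        (tendsto_const_nhds.div_atTop hsq)
    have := ((h1.mul h2).const_mul (-ε)).div_const (2 * ε ^ 2)
    simpa using this
  have hIio_eq : EqOn g (fun s => (-(Real.exp ((s - t) / ε)) *
      (Real.arctan s + 2 * ε ^ 2 * s / (1 + s ^ 2) ^ 2)) / (2 * ε ^ 2)) (Iio t) := by
    intro s hs
    have hst : s < t := hs
    have habs : |s - t| = -(s - t) := abs_of_neg (by linarith)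
    rw [hg]
    simp only
    rw [habs, Real.sign_of_neg (by linarith : s - t < 0), neg_neg]
    ring
  have hIicInt' : IntegrableOn (fun s => (-(Real.exp ((s - t) / ε)) *
      (Real.arctan s + 2 * ε ^ 2 * s / (1 + s ^ 2) ^ 2)) / (2 * ε ^ 2)) (Iic t) := by
    rw [integrableOn_Iic_iff_integrableOn_Iio]
    exact (hIicInt.mono_set Iio_subset_Iic_self).congr_fun hIio_eq measurableSet_Iio
  have hIicVal : ∫ s in Iic t, g s =
      (-ε * (Real.exp ((t - t) / ε) * (Real.arctan t - ε / (1 + t ^ 2))) / (2 * ε ^ 2)) - 0 := by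
    rw [integral_Iic_eq_integral_Iio, setIntegral_congr_fun measurableSet_Iio hIio_eq,
      ← integral_Iic_eq_integral_Iio]
    refine integral_Iic_of_hasDerivAt_of_tendsto' (fun x _ => hderiv_m hε' t x) hIicInt' ?_
    have h1 : Tendsto (fun s : ℝ => Real.exp ((s - t) / ε)) atBot (𝓝 0) := by
      apply Real.tendsto_exp_atBot.comp
      apply Tendsto.atBot_div_const hε
      simpa [sub_eq_add_neg] using
        tendsto_atBot_add_const_right atBot (-t) (tendsto_id (α := ℝ))
    have hsq : Tendsto (fun s : ℝ => 1 + s ^ 2) atBot atTop := by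
      have h := (tendsto_atTop_add_const_left atTop 1 (tendsto_pow_atTop two_ne_zero)).comp
        (tendsto_neg_atBot_atTop (G := ℝ))
      refine h.congr fun s => ?_
      simp [Function.comp, neg_sq]
    have h2 : Tendsto (fun s : ℝ => Real.arctan s - ε / (1 + s ^ 2)) atBot (𝓝 (-(π / 2) - 0)) :=
      (Real.tendsto_arctan_atBot.mono_right nhdsWithin_le_nhds).sub
        (tendsto_const_nhds.div_atTop hsq)
    have := ((h1.mul h2).const_mul (-ε)).div_const (2 * ε ^ 2)
    simpa using this
  have hd : (1:ℝ) + t ^ 2 ≠ 0 := by positivity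
  rw [hsplit, hIicVal, hIoiVal, sub_self, zero_div, Real.exp_zero]
  rw [neg_zero, zero_div, Real.exp_zero]
  field_simp
  ring
end

section
/- Let β : (0,∞) → [0,∞) be nonincreasing with ∫₀^∞ min(s,1)·β(s) ds < ∞, and suppose there exists a > 0 such that β is strictly decreasing on (0,a). Then for every ξ > 0: ∫₀^∞ sin(2πξs)·β(s) ds > 0. (Hence for kernels α(s) = sgn(s)·β(|s|) of this form, i·α̂(ξ) > 0 for ξ > 0, so α̂ vanishes only at ξ = 0.) -/
open MeasureTheory Real Set Filter
open scoped Topology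

/-- positivity of the Fourier-sine transform of a nonincreasing
nonnegative kernel profile that is strictly decreasing near the origin. -/
theorem stmt_9 (β : ℝ → ℝ) (hnn : ∀ s, 0 < s → 0 ≤ β s)
    (hmono : ∀ s t, 0 < s → s ≤ t → β t ≤ β s)
    (hint : IntegrableOn (fun s => min s 1 * β s) (Set.Ioi 0))
    (a : ℝ) (ha : 0 < a)
    (hstrict : ∀ s t, 0 < s → s < t → t < a → β t < β s)
    (ξ : ℝ) (hξ : 0 < ξ) :
    0 < ∫ s in Set.Ioi (0:ℝ), Real.sin (2 * π * ξ * s) * β s := by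
  have hξ0 : ξ ≠ 0 := ne_of_gt hξ
  set T : ℝ := 1 / (2 * ξ) with hT
  have hT0 : 0 < T := by rw [hT]; positivity
  set g : ℝ → ℝ := fun s => Real.sin (2 * π * ξ * s) * β s with hg
  have hTpi : 2 * π * ξ * T = π := by rw [hT]; field_simp
  have hsin : ∀ s : ℝ, Real.sin (2 * π * ξ * (s + T)) = -Real.sin (2 * π * ξ * s) := by
    intro s
    rw [mul_add, hTpi, Real.sin_add_pi]
  -- a.e. measurability of β on (0, ∞)
  have hβae : AEMeasurable β (volume.restrict (Ioi (0:ℝ))) := by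
    have h1 : AEMeasurable (fun s => min s 1 * β s) (volume.restrict (Ioi (0:ℝ))) :=
      hint.aemeasurable
    have h2 : AEMeasurable (fun s => (min s 1 * β s) / min s 1) (volume.restrict (Ioi (0:ℝ))) :=
      h1.div ((measurable_id.min measurable_const).aemeasurable)
    refine h2.congr ?_
    filter_upwards [ae_restrict_mem measurableSet_Ioi] with s hs
    have hmn : (0:ℝ) < min s 1 := lt_min hs one_pos
    field_simp
  have hgae : AEStronglyMeasurable g (volume.restrict (Ioi (0:ℝ))) := by
    have hm : Measurable fun s : ℝ => Real.sin (2 * π * ξ * s) := by fun_prop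
    exact (hm.aemeasurable.mul hβae).aestronglyMeasurable
  -- integrability of g on (0, ∞)
  have hgi : IntegrableOn g (Ioi (0:ℝ)) := by
    have hC : Integrable (fun s => (2 * π * ξ + 1) * (min s 1 * β s))
        (volume.restrict (Ioi (0:ℝ))) := hint.const_mul _
    refine Integrable.mono' hC hgae ?_
    filter_upwards [ae_restrict_mem measurableSet_Ioi] with s hs
    have hs0 : (0:ℝ) < s := hs
    have hβ : 0 ≤ β s := hnn s hs0
    have h1 : ‖g s‖ = |Real.sin (2 * π * ξ * s)| * β s := by
      rw [hg]; rw [Real.norm_eq_abs, abs_mul, abs_of_nonneg hβ]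
    rw [h1]
    rcases le_or_gt s 1 with h | h
    · have hmin : min s 1 = s := min_eq_left h
      have h2 : |Real.sin (2 * π * ξ * s)| ≤ 2 * π * ξ * s := by
        calc |Real.sin (2 * π * ξ * s)| ≤ |2 * π * ξ * s| := Real.abs_sin_le_abs
          _ = 2 * π * ξ * s := abs_of_nonneg (by positivity)
      calc |Real.sin (2 * π * ξ * s)| * β s ≤ (2 * π * ξ * s) * β s :=
            mul_le_mul_of_nonneg_right h2 hβ
        _ = (2 * π * ξ) * (min s 1 * β s) := by rw [hmin]; ring
        _ ≤ (2 * π * ξ + 1) * (min s 1 * β s) := by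
            have hnn' : 0 ≤ min s 1 * β s := mul_nonneg (le_min hs0.le zero_le_one) hβ
            nlinarith [mul_nonneg (show (0:ℝ) ≤ 2 * π * ξ by positivity) hnn']
    · have hmin : min s 1 = 1 := min_eq_right h.le
      have h2 : |Real.sin (2 * π * ξ * s)| ≤ 1 := Real.abs_sin_le_one _
      calc |Real.sin (2 * π * ξ * s)| * β s ≤ 1 * β s := mul_le_mul_of_nonneg_right h2 hβ
        _ = min s 1 * β s := by rw [hmin]
        _ ≤ (2 * π * ξ + 1) * (min s 1 * β s) := by
            have hnn' : 0 ≤ min s 1 * β s := by rw [hmin]; simpa using hβ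
            nlinarith [mul_nonneg (show (0:ℝ) ≤ 2 * π * ξ by positivity) hnn']
  -- interval integrability helpers
  have hII : ∀ u v : ℝ, 0 ≤ u → 0 ≤ v → IntervalIntegrable g volume u v := by
    intro u v hu hv
    rw [intervalIntegrable_iff]
    exact hgi.mono_set (fun x hx => lt_of_le_of_lt (le_min hu hv) hx.1)
  have hIIshift : ∀ u v : ℝ, 0 ≤ u → 0 ≤ v →
      IntervalIntegrable (fun x => g (x + T)) volume u v := by
    intro u v hu hv
    have h := (hII (u + T) (v + T) (by linarith) (by linarith)).comp_add_right T
    simpa using h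
  have hu0 : ∀ k : ℕ, (0:ℝ) ≤ 2 * (k:ℝ) * T :=
    fun k => mul_nonneg (by positivity) hT0.le
  -- sine nonnegativity on even half-period intervals
  have sinnn : ∀ (k : ℕ) (x : ℝ), 2 * (k:ℝ) * T ≤ x → x ≤ 2 * (k:ℝ) * T + T →
      0 ≤ Real.sin (2 * π * ξ * x) := by
    intro k x hx1 hx2
    have h2k : 2 * π * ξ * (2 * (k:ℝ) * T) = (k:ℝ) * (2 * π) := by
      have h : 2 * π * ξ * (2 * (k:ℝ) * T) = 2 * (k:ℝ) * (2 * π * ξ * T) := by ring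
      rw [h, hTpi]; ring
    have hm1 : 2 * π * ξ * (2 * (k:ℝ) * T) ≤ 2 * π * ξ * x :=
      mul_le_mul_of_nonneg_left hx1 (by positivity)
    have hm2 : 2 * π * ξ * x ≤ 2 * π * ξ * (2 * (k:ℝ) * T) + 2 * π * ξ * T := by
      have h := mul_le_mul_of_nonneg_left hx2 (by positivity : (0:ℝ) ≤ 2 * π * ξ)
      rw [mul_add] at h
      exact h
    have key := Real.sin_add_int_mul_two_pi (2 * π * ξ * x - (k:ℝ) * (2 * π)) (k:ℤ)
    push_cast at key
    rw [sub_add_cancel] at key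
    rw [key]
    apply Real.sin_nonneg_of_nonneg_of_le_pi
    · linarith
    · linarith [hTpi]
  -- the pair identity
  have pair : ∀ k : ℕ, (∫ x in (2 * (k:ℝ) * T)..(2 * ((k:ℝ) + 1) * T), g x)
      = ∫ x in (2 * (k:ℝ) * T)..(2 * (k:ℝ) * T + T), (g x + g (x + T)) := by
    intro k
    set u := 2 * (k:ℝ) * T with hu
    have hu' : 0 ≤ u := hu0 k
    have h1 : IntervalIntegrable g volume u (u + T) := hII _ _ hu' (by linarith)
    have h2 : IntervalIntegrable g volume (u + T) (u + T + T) :=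
      hII _ _ (by linarith) (by linarith)
    have h3 : IntervalIntegrable (fun x => g (x + T)) volume u (u + T) :=
      hIIshift _ _ hu' (by linarith)
    have e1 : 2 * ((k:ℝ) + 1) * T = u + T + T := by rw [hu]; ring
    rw [e1, ← intervalIntegral.integral_add_adjacent_intervals h1 h2,
      intervalIntegral.integral_add h1 h3, intervalIntegral.integral_comp_add_right g T]
  -- the summand rewritten with the monotonicity difference
  have heq : ∀ x : ℝ, g x + g (x + T) = Real.sin (2 * π * ξ * x) * (β x - β (x + T)) := by
    intro x
    rw [hg]
    simp only
    rw [hsin x]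
    ring
  -- nonnegativity of each pair
  have pairpos : ∀ k : ℕ, 0 ≤ ∫ x in (2 * (k:ℝ) * T)..(2 * ((k:ℝ) + 1) * T), g x := by
    intro k
    rw [pair k]
    apply intervalIntegral.integral_nonneg (by linarith [hu0 k])
    intro x hx
    have hge : 2 * (k:ℝ) * T ≤ x := hx.1
    have hle : x ≤ 2 * (k:ℝ) * T + T := hx.2
    have hx0 : 0 ≤ x := le_trans (hu0 k) hge
    rw [heq x]
    rcases eq_or_lt_of_le hx0 with h0 | h0
    · rw [← h0]; simp
    · exact mul_nonneg (sinnn k x hge hle)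
        (sub_nonneg.2 (hmono x (x + T) h0 (by linarith)))
  -- positivity of the first pair
  have hd0 : 0 < ∫ x in (2 * ((0:ℕ):ℝ) * T)..(2 * (((0:ℕ):ℝ) + 1) * T), g x := by
    rw [pair 0]
    have e : 2 * ((0:ℕ):ℝ) * T = 0 := by norm_num
    rw [e, zero_add]
    set c := min a T with hc
    have hc0 : 0 < c := lt_min ha hT0
    have hcT : c ≤ T := min_le_right _ _
    have hca : c ≤ a := min_le_left _ _
    have hIIh : ∀ u v : ℝ, 0 ≤ u → 0 ≤ v →
        IntervalIntegrable (fun x => g x + g (x + T)) volume u v :=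
      fun u v hu hv => (hII u v hu hv).add (hIIshift u v hu hv)
    have hs1 : IntervalIntegrable (fun x => g x + g (x + T)) volume 0 (c / 2) :=
      hIIh _ _ le_rfl (by linarith)
    have hs2 : IntervalIntegrable (fun x => g x + g (x + T)) volume (c / 2) T :=
      hIIh _ _ (by linarith) hT0.le
    rw [← intervalIntegral.integral_add_adjacent_intervals hs1 hs2]
    have hpos1 : 0 < ∫ x in (0:ℝ)..(c / 2), (g x + g (x + T)) := by
      apply intervalIntegral.intervalIntegral_pos_of_pos_on hs1 _ (by linarith)
      intro x hx
      obtain ⟨hx0, hxc⟩ := hx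
      rw [heq x]
      apply mul_pos
      · apply Real.sin_pos_of_pos_of_lt_pi (by positivity)
        have h := mul_lt_mul_of_pos_left (show x < T by linarith)
          (show (0:ℝ) < 2 * π * ξ by positivity)
        rw [hTpi] at h
        exact h
      · have h1 : β (3 * c / 4) < β x := hstrict x (3 * c / 4) hx0 (by linarith) (by linarith)
        have h2 : β (x + T) ≤ β (3 * c / 4) := hmono (3 * c / 4) (x + T) (by linarith) (by linarith)
        linarith
    have hpos2 : 0 ≤ ∫ x in (c / 2)..T, (g x + g (x + T)) := by
      apply intervalIntegral.integral_nonneg (by linarith)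
      intro x hx
      obtain ⟨hx1, hx2⟩ := hx
      rw [heq x]
      apply mul_nonneg
      · apply sinnn 0 x <;> push_cast <;> linarith
      · exact sub_nonneg.2 (hmono x (x + T) (by linarith) (by linarith))
    linarith
  -- partial sums converge to the integral over (0, ∞)
  have htend : Tendsto (fun n : ℕ => 2 * (n:ℝ) * T) atTop atTop := by
    have h1 : Tendsto (fun n : ℕ => (n:ℝ) * (2 * T)) atTop atTop :=
      Tendsto.atTop_mul_const (by linarith) tendsto_natCast_atTop_atTop
    exact h1.congr fun n => by ring
  have hS : Tendsto (fun n : ℕ => ∫ x in (0:ℝ)..(2 * (n:ℝ) * T), g x) atTop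
      (𝓝 (∫ s in Set.Ioi (0:ℝ), g s)) :=
    MeasureTheory.intervalIntegral_tendsto_integral_Ioi 0 hgi htend
  have hdecomp : ∀ n : ℕ,
      (∑ k ∈ Finset.range n, ∫ x in (2 * (k:ℝ) * T)..(2 * ((k:ℝ) + 1) * T), g x)
        = ∫ x in (0:ℝ)..(2 * (n:ℝ) * T), g x := by
    intro n
    have h := intervalIntegral.sum_integral_adjacent_intervals
      (a := fun k : ℕ => 2 * (k:ℝ) * T) (f := g) (μ := volume) (n := n)
      (fun k _ => hII _ _ (hu0 k) (hu0 (k + 1)))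
    have e0 : 2 * ((0:ℕ):ℝ) * T = 0 := by norm_num
    rw [e0] at h
    rw [← h]
    refine Finset.sum_congr rfl fun k _ => ?_
    have ek : ((k + 1 : ℕ) : ℝ) = (k:ℝ) + 1 := by push_cast; ring
    rw [ek]
  have hS' : Tendsto (fun n : ℕ =>
      ∑ k ∈ Finset.range n, ∫ x in (2 * (k:ℝ) * T)..(2 * ((k:ℝ) + 1) * T), g x) atTop
      (𝓝 (∫ s in Set.Ioi (0:ℝ), g s)) := by
    refine hS.congr fun n => (hdecomp n).symm
  have hge : (∫ x in (2 * ((0:ℕ):ℝ) * T)..(2 * (((0:ℕ):ℝ) + 1) * T), g x)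
      ≤ ∫ s in Set.Ioi (0:ℝ), g s := by
    refine ge_of_tendsto hS' ?_
    filter_upwards [eventually_ge_atTop 1] with n hn
    exact Finset.single_le_sum (f := fun k : ℕ =>
        ∫ x in (2 * (k:ℝ) * T)..(2 * ((k:ℝ) + 1) * T), g x)
      (fun k _ => pairpos k) (Finset.mem_range.2 hn)
  exact lt_of_lt_of_le hd0 hge
end

section
/- Let α(s) = sgn(s)·β(|s|) with β : (0,∞) → [0,∞) measurable, and assume the moments α₁ = 2∫₀^∞ s·β(s) ds and α₃ = 2∫₀^∞ s³·β(s) ds are finite with α₁ > 0. Set C_α := 4π³·α₃/(3·α₁). Then for every ε > 0 and every ξ ≥ 0: 2πξ − C_α·ε²·ξ³ ≤ S_ε(ξ) ≤ 2πξ. (Near-field estimate for the Fourier symbol of the nonlocal derivative.) -/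
open MeasureTheory Real Set Filter

lemma aux_sub_cube_le_sin {x : ℝ} (hx : 0 ≤ x) : x - x ^ 3 / 6 ≤ Real.sin x := by
  have hmono : MonotoneOn (fun t : ℝ => Real.sin t - (t - t ^ 3 / 6)) (Set.Ici 0) := by
    apply monotoneOn_of_hasDerivWithinAt_nonneg (f' := fun t => Real.cos t - (1 - 3 * t ^ 2 / 6))
      (convex_Ici 0)
    · fun_prop
    · intro y _
      exact ((Real.hasDerivAt_sin y).sub
        ((hasDerivAt_id y).sub ((hasDerivAt_pow 3 y).div_const 6))).hasDerivWithinAt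
    · intro y _
      have := Real.one_sub_sq_div_two_le_cos (x := y)
      nlinarith
  have := hmono Set.self_mem_Ici (Set.mem_Ici.2 hx) hx
  simp only [Real.sin_zero] at this
  linarith

/-- near-field estimate `2πξ - C_α ε² ξ³ ≤ S_ε(ξ) ≤ 2πξ` for the
Fourier-sine symbol of the rescaled odd kernel `α(s) = sgn(s) β(|s|)`. -/
theorem stmt_11 (β : ℝ → ℝ) (hβmeas : Measurable β) (hnn : ∀ s, 0 < s → 0 ≤ β s)
    (hint1 : IntegrableOn (fun s => s * β s) (Set.Ioi 0))
    (hint3 : IntegrableOn (fun s => s ^ 3 * β s) (Set.Ioi 0))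
    (α₁ α₃ : ℝ)
    (hα₁ : α₁ = 2 * ∫ s in Set.Ioi (0:ℝ), s * β s)
    (hα₃ : α₃ = 2 * ∫ s in Set.Ioi (0:ℝ), s ^ 3 * β s)
    (hα₁pos : 0 < α₁)
    (Cα : ℝ) (hC : Cα = 4 * π ^ 3 * α₃ / (3 * α₁))
    (S : ℝ → ℝ → ℝ)
    (hS : ∀ ε ξ, S ε ξ =
      2 * ∫ t in Set.Ioi (0:ℝ), Real.sin (2 * π * ξ * t) * (β (t / ε) / (ε ^ 2 * α₁)))
    (ε : ℝ) (hε : 0 < ε) (ξ : ℝ) (hξ : 0 ≤ ξ) :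
    2 * π * ξ - Cα * ε ^ 2 * ξ ^ 3 ≤ S ε ξ ∧ S ε ξ ≤ 2 * π * ξ := by
  have hεne : ε ≠ 0 := hε.ne'
  have hεinv : (0:ℝ) < ε⁻¹ := inv_pos.2 hε
  obtain ⟨c, hc⟩ : ∃ c : ℝ, c = 2 * π * ξ := ⟨_, rfl⟩
  have hcnn : 0 ≤ c := by rw [hc]; positivity
  obtain ⟨A, hA⟩ : ∃ A : ℝ, A = ∫ s in Set.Ioi (0:ℝ), s * β s := ⟨_, rfl⟩
  obtain ⟨B, hB⟩ : ∃ B : ℝ, B = ∫ s in Set.Ioi (0:ℝ), s ^ 3 * β s := ⟨_, rfl⟩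
  rw [← hA] at hα₁
  rw [← hB] at hα₃
  have hApos : 0 < A := by linarith
  -- integrability of rescaled moment integrands
  have hcomp1 : IntegrableOn (fun t => (ε⁻¹ * t) * β (ε⁻¹ * t)) (Set.Ioi (0:ℝ)) := by
    have := (integrableOn_Ioi_comp_mul_left_iff (fun s => s * β s) 0 hεinv).2
    simpa using this (by simpa using hint1)
  have hcomp3 : IntegrableOn (fun t => (ε⁻¹ * t) ^ 3 * β (ε⁻¹ * t)) (Set.Ioi (0:ℝ)) := by
    have := (integrableOn_Ioi_comp_mul_left_iff (fun s => s ^ 3 * β s) 0 hεinv).2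
    simpa using this (by simpa using hint3)
  have hI1 : IntegrableOn (fun t => t * β (t / ε)) (Set.Ioi (0:ℝ)) := by
    have h : IntegrableOn (fun t => ε * ((ε⁻¹ * t) * β (ε⁻¹ * t))) (Set.Ioi (0:ℝ)) :=
      hcomp1.const_mul ε
    refine h.congr_fun (fun t _ => ?_) measurableSet_Ioi
    field_simp
  have hI3 : IntegrableOn (fun t => t ^ 3 * β (t / ε)) (Set.Ioi (0:ℝ)) := by
    have h : IntegrableOn (fun t => ε ^ 3 * ((ε⁻¹ * t) ^ 3 * β (ε⁻¹ * t))) (Set.Ioi (0:ℝ)) :=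
      hcomp3.const_mul (ε ^ 3)
    refine h.congr_fun (fun t _ => ?_) measurableSet_Ioi
    field_simp
  -- values of the rescaled moment integrals
  have hval1 : ∫ t in Set.Ioi (0:ℝ), t * β (t / ε) = ε ^ 2 * A := by
    have key := MeasureTheory.integral_comp_mul_left_Ioi (fun s => s * β s) 0 hεinv
    simp only [mul_zero, smul_eq_mul, inv_inv] at key
    calc ∫ t in Set.Ioi (0:ℝ), t * β (t / ε)
        = ∫ t in Set.Ioi (0:ℝ), ε * ((ε⁻¹ * t) * β (ε⁻¹ * t)) := by
          refine setIntegral_congr_fun measurableSet_Ioi (fun t _ => ?_)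
          field_simp
      _ = ε * ∫ t in Set.Ioi (0:ℝ), (ε⁻¹ * t) * β (ε⁻¹ * t) := integral_const_mul _ _
      _ = ε ^ 2 * A := by rw [key, ← hA]; ring
  have hval3 : ∫ t in Set.Ioi (0:ℝ), t ^ 3 * β (t / ε) = ε ^ 4 * B := by
    have key := MeasureTheory.integral_comp_mul_left_Ioi (fun s => s ^ 3 * β s) 0 hεinv
    simp only [mul_zero, smul_eq_mul, inv_inv] at key
    calc ∫ t in Set.Ioi (0:ℝ), t ^ 3 * β (t / ε)
        = ∫ t in Set.Ioi (0:ℝ), ε ^ 3 * ((ε⁻¹ * t) ^ 3 * β (ε⁻¹ * t)) := by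
          refine setIntegral_congr_fun measurableSet_Ioi (fun t _ => ?_)
          field_simp
      _ = ε ^ 3 * ∫ t in Set.Ioi (0:ℝ), (ε⁻¹ * t) ^ 3 * β (ε⁻¹ * t) := integral_const_mul _ _
      _ = ε ^ 4 * B := by rw [key, ← hB]; ring
  -- the sine integrand
  have hFmeas : AEStronglyMeasurable (fun t => Real.sin (c * t) * β (t / ε))
      (volume.restrict (Set.Ioi (0:ℝ))) := by
    apply Measurable.aestronglyMeasurable
    exact (Real.measurable_sin.comp (measurable_const.mul measurable_id)).mul
      (hβmeas.comp (measurable_id.div_const ε))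
  have hFint : IntegrableOn (fun t => Real.sin (c * t) * β (t / ε)) (Set.Ioi (0:ℝ)) := by
    refine (hI1.const_mul c).mono hFmeas ?_
    filter_upwards with t
    have h1 : ‖Real.sin (c * t) * β (t / ε)‖ = |Real.sin (c * t)| * |β (t / ε)| := by
      rw [Real.norm_eq_abs, abs_mul]
    have h2 : ‖c * (t * β (t / ε))‖ = |c * t| * |β (t / ε)| := by
      rw [Real.norm_eq_abs, ← mul_assoc, abs_mul]
    rw [h1, h2]
    exact mul_le_mul_of_nonneg_right Real.abs_sin_le_abs (abs_nonneg _)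
  -- integral bounds
  have hupper : (∫ t in Set.Ioi (0:ℝ), Real.sin (c * t) * β (t / ε)) ≤ c * (ε ^ 2 * A) := by
    calc (∫ t in Set.Ioi (0:ℝ), Real.sin (c * t) * β (t / ε))
        ≤ ∫ t in Set.Ioi (0:ℝ), c * (t * β (t / ε)) := by
          refine setIntegral_mono_on hFint (hI1.const_mul c) measurableSet_Ioi (fun t ht => ?_)
          have hb : 0 ≤ β (t / ε) := hnn _ (div_pos ht hε)
          have hct : 0 ≤ c * t := mul_nonneg hcnn (le_of_lt ht)
          have : Real.sin (c * t) ≤ c * t := Real.sin_le hct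
          calc Real.sin (c * t) * β (t / ε) ≤ (c * t) * β (t / ε) :=
                mul_le_mul_of_nonneg_right this hb
            _ = c * (t * β (t / ε)) := by ring
      _ = c * (ε ^ 2 * A) := by rw [integral_const_mul, hval1]
  have hlower : c * (ε ^ 2 * A) - c ^ 3 / 6 * (ε ^ 4 * B)
      ≤ ∫ t in Set.Ioi (0:ℝ), Real.sin (c * t) * β (t / ε) := by
    have hLint : IntegrableOn
        (fun t => c * (t * β (t / ε)) - c ^ 3 / 6 * (t ^ 3 * β (t / ε))) (Set.Ioi (0:ℝ)) :=
      (hI1.const_mul c).sub (hI3.const_mul (c ^ 3 / 6))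
    calc c * (ε ^ 2 * A) - c ^ 3 / 6 * (ε ^ 4 * B)
        = ∫ t in Set.Ioi (0:ℝ),
            (c * (t * β (t / ε)) - c ^ 3 / 6 * (t ^ 3 * β (t / ε))) := by
          rw [integral_sub (hI1.const_mul c) (hI3.const_mul (c ^ 3 / 6)),
            integral_const_mul, integral_const_mul, hval1, hval3]
      _ ≤ ∫ t in Set.Ioi (0:ℝ), Real.sin (c * t) * β (t / ε) := by
          refine setIntegral_mono_on hLint hFint measurableSet_Ioi (fun t ht => ?_)
          have hb : 0 ≤ β (t / ε) := hnn _ (div_pos ht hε)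
          have hct : 0 ≤ c * t := mul_nonneg hcnn (le_of_lt ht)
          have hsin : c * t - (c * t) ^ 3 / 6 ≤ Real.sin (c * t) := aux_sub_cube_le_sin hct
          calc c * (t * β (t / ε)) - c ^ 3 / 6 * (t ^ 3 * β (t / ε))
              = (c * t - (c * t) ^ 3 / 6) * β (t / ε) := by ring
            _ ≤ Real.sin (c * t) * β (t / ε) := mul_le_mul_of_nonneg_right hsin hb
  -- rewrite S
  have hSval : S ε ξ
      = 2 * (∫ t in Set.Ioi (0:ℝ), Real.sin (c * t) * β (t / ε)) * (ε ^ 2 * α₁)⁻¹ := by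
    rw [hS]
    have : ∀ t : ℝ, Real.sin (2 * π * ξ * t) * (β (t / ε) / (ε ^ 2 * α₁))
        = (Real.sin (c * t) * β (t / ε)) * (ε ^ 2 * α₁)⁻¹ := by
      intro t; rw [hc, div_eq_mul_inv]; ring
    simp_rw [this]
    rw [integral_mul_const]
    ring
  have hden : (0:ℝ) < (ε ^ 2 * α₁) := by positivity
  have hdeninv : (0:ℝ) ≤ (ε ^ 2 * α₁)⁻¹ := inv_nonneg.2 hden.le
  constructor
  · have h2 : 2 * (c * (ε ^ 2 * A) - c ^ 3 / 6 * (ε ^ 4 * B)) * (ε ^ 2 * α₁)⁻¹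
        = 2 * π * ξ - Cα * ε ^ 2 * ξ ^ 3 := by
      rw [hC, hα₃, hα₁, hc]
      have hAne : A ≠ 0 := hApos.ne'
      field_simp
      ring
    have h3 : 2 * (c * (ε ^ 2 * A) - c ^ 3 / 6 * (ε ^ 4 * B)) * (ε ^ 2 * α₁)⁻¹
        ≤ 2 * (∫ t in Set.Ioi (0:ℝ), Real.sin (c * t) * β (t / ε)) * (ε ^ 2 * α₁)⁻¹ := by
      apply mul_le_mul_of_nonneg_right _ hdeninv
      linarith
    rw [hSval]; linarith
  · have h2 : 2 * (c * (ε ^ 2 * A)) * (ε ^ 2 * α₁)⁻¹ = 2 * π * ξ := by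
      rw [hα₁, hc]
      have hAne : A ≠ 0 := hApos.ne'
      field_simp
    have h3 : 2 * (∫ t in Set.Ioi (0:ℝ), Real.sin (c * t) * β (t / ε)) * (ε ^ 2 * α₁)⁻¹
        ≤ 2 * (c * (ε ^ 2 * A)) * (ε ^ 2 * α₁)⁻¹ := by
      apply mul_le_mul_of_nonneg_right _ hdeninv
      linarith
    rw [hSval]; linarith
end

section
/- Let α(s) = sgn(s)·β(|s|) with β : (0,∞) → [0,∞) nonincreasing, min(s,1)·β(s) integrable on (0,∞), and α₁ := 2∫₀^∞ s·β(s) ds ∈ (0,∞). Assume the singular flatness condition: there exist b > 0, k ∈ (−2,0), and K₋, K₊ > 0 with K₋·s^k ≤ β(s) ≤ K₊·s^k for all s ∈ (0,b), and c := ∫₀¹ sin(πu)·(K₋·u^k − K₊·(u+1)^k) du > 0. Set C′ := c·2^{−k}/α₁. Then for every ε > 0 and every ξ ≥ 1/(εb): S_ε(ξ) ≥ C′·ε^{−2−k}·ξ^{−1−k} > 0. (Far-field lower bound, singular-kernel case.) -/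
open MeasureTheory Real Set Filter

/-- If `s ↦ min (a*s) 1 * g s` is a.e. strongly measurable on `(0,∞)`, so is `g`. -/
lemma aux_aesm (g : ℝ → ℝ) (a : ℝ) (ha : 0 < a)
    (hg : AEStronglyMeasurable (fun s => min (a * s) 1 * g s) (volume.restrict (Set.Ioi 0))) :
    AEStronglyMeasurable g (volume.restrict (Set.Ioi 0)) := by
  have hinv : AEStronglyMeasurable (fun s : ℝ => (min (a * s) 1)⁻¹)
      (volume.restrict (Set.Ioi 0)) :=
    (((continuous_const.mul continuous_id).min continuous_const).measurable.inv).aestronglyMeasurable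
  have h3 := hinv.mul hg
  refine h3.congr ?_
  refine (ae_restrict_iff' measurableSet_Ioi).mpr (ae_of_all _ fun s hs => ?_)
  have hmin : 0 < min (a * s) 1 := lt_min (mul_pos ha hs) one_pos
  simp only [Pi.mul_apply]
  rw [← mul_assoc, inv_mul_cancel₀ hmin.ne', one_mul]

set_option maxHeartbeats 1600000 in
/-- far-field lower bound for the Fourier-sine symbol, singular
kernel case `K₋ s^k ≤ β(s) ≤ K₊ s^k` near zero with `k ∈ (-2,0)`. -/
theorem stmt_12 (β : ℝ → ℝ) (hnn : ∀ s, 0 < s → 0 ≤ β s)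
    (hmono : ∀ s t, 0 < s → s ≤ t → β t ≤ β s)
    (hint : IntegrableOn (fun s => min s 1 * β s) (Set.Ioi 0))
    (α₁ : ℝ) (hα₁ : α₁ = 2 * ∫ s in Set.Ioi (0:ℝ), s * β s) (hα₁pos : 0 < α₁)
    (b k Km Kp : ℝ) (hb : 0 < b) (hkl : -2 < k) (hku : k < 0)
    (hKm : 0 < Km) (hKp : 0 < Kp)
    (hlow : ∀ s, 0 < s → s < b → Km * s ^ k ≤ β s)
    (hhigh : ∀ s, 0 < s → s < b → β s ≤ Kp * s ^ k)
    (c : ℝ)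
    (hc : c = ∫ u in Set.Ioo (0:ℝ) 1, Real.sin (π * u) * (Km * u ^ k - Kp * (u + 1) ^ k))
    (hcpos : 0 < c)
    (C' : ℝ) (hC' : C' = c * (2:ℝ) ^ (-k) / α₁)
    (S : ℝ → ℝ → ℝ)
    (hS : ∀ ε ξ, S ε ξ =
      2 * ∫ t in Set.Ioi (0:ℝ), Real.sin (2 * π * ξ * t) * (β (t / ε) / (ε ^ 2 * α₁)))
    (ε : ℝ) (hε : 0 < ε) (ξ : ℝ) (hξ : 1 / (ε * b) ≤ ξ) :
    C' * ε ^ (-2 - k) * ξ ^ (-1 - k) ≤ S ε ξ ∧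
    0 < C' * ε ^ (-2 - k) * ξ ^ (-1 - k) := by
  have hξ0 : 0 < ξ := lt_of_lt_of_le (by positivity) hξ
  set l : ℝ := 2 * π * ξ with hl
  set h : ℝ := 1 / (2 * ξ) with hhdef
  have hh : 0 < h := by positivity
  have hl0 : 0 < l := by positivity
  have hlh : l * h = π := by
    rw [hl, hhdef]; field_simp
  have h2b : 2 * h ≤ ε * b := by
    rw [hhdef]
    rw [div_le_iff₀ (by positivity)] at hξ
    rw [mul_one_div, div_le_iff₀ (by positivity)]
    nlinarith
  set F : ℝ → ℝ := fun t => Real.sin (l * t) * β (t / ε) with hF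
  -- measurability of β and of the rescaled kernel
  have hβm : AEStronglyMeasurable β (volume.restrict (Set.Ioi 0)) :=
    aux_aesm β 1 one_pos (by simpa using hint.1)
  have hintε : IntegrableOn (fun t => min (ε⁻¹ * t) 1 * β (ε⁻¹ * t)) (Set.Ioi 0) := by
    have := (integrableOn_Ioi_comp_mul_left_iff (fun s => min s 1 * β s) 0
      (inv_pos.mpr hε)).mpr (by simpa using hint)
    simpa using this
  have hfm : AEStronglyMeasurable (fun t => β (t / ε)) (volume.restrict (Set.Ioi 0)) := by
    have := aux_aesm (fun t => β (ε⁻¹ * t)) ε⁻¹ (inv_pos.mpr hε) hintε.1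
    simpa [div_eq_inv_mul] using this
  -- integrability of F on (0,∞)
  have hFint : IntegrableOn F (Set.Ioi 0) := by
    refine Integrable.mono' ((hintε.const_mul (max (l * ε) 1))) ?_ ?_
    · exact ((Real.continuous_sin.comp (continuous_const.mul continuous_id)).aestronglyMeasurable).mul hfm
    · refine (ae_restrict_iff' measurableSet_Ioi).mpr (ae_of_all _ fun t ht => ?_)
      have ht0 : (0:ℝ) < t := ht
      have htε : 0 < t / ε := by positivity
      have hβnn : 0 ≤ β (t / ε) := hnn _ htε
      have habs : ‖F t‖ = |Real.sin (l * t)| * β (t / ε) := by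
        rw [hF]; simp [abs_mul, abs_of_nonneg hβnn]
      rw [habs]
      have hsb : |Real.sin (l * t)| ≤ max (l * ε) 1 * min (ε⁻¹ * t) 1 := by
        rcases le_or_gt (ε⁻¹ * t) 1 with hcase | hcase
        · have : |Real.sin (l * t)| ≤ |l * t| := Real.abs_sin_le_abs
          rw [min_eq_left hcase]
          calc |Real.sin (l * t)| ≤ |l * t| := this
            _ = (l * ε) * (ε⁻¹ * t) := by
                rw [abs_of_nonneg (by positivity)]; field_simp
            _ ≤ max (l * ε) 1 * (ε⁻¹ * t) := by
                apply mul_le_mul_of_nonneg_right (le_max_left _ _) (by positivity)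
        · rw [min_eq_right hcase.le]
          calc |Real.sin (l * t)| ≤ 1 := Real.abs_sin_le_one _
            _ ≤ max (l * ε) 1 * 1 := by simpa using le_max_right (l * ε) 1
      calc |Real.sin (l * t)| * β (t/ε) ≤ (max (l * ε) 1 * min (ε⁻¹ * t) 1) * β (t/ε) := by
            exact mul_le_mul_of_nonneg_right hsb hβnn
        _ = max (l * ε) 1 * (min (ε⁻¹ * t) 1 * β (ε⁻¹ * t)) := by
            rw [mul_assoc, div_eq_inv_mul]
  -- interval integrability of F and its translate
  have hFiv : ∀ u v : ℝ, 0 ≤ u → 0 ≤ v → IntervalIntegrable F volume u v := by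
    intro u v hu hv
    rw [intervalIntegrable_iff]
    exact hFint.mono_set (fun x hx => (le_min hu hv).trans_lt hx.1)
  have hFsh : ∀ u v : ℝ, 0 ≤ u → 0 ≤ v →
      IntervalIntegrable (fun t => F (t + h)) volume u v := by
    intro u v hu hv
    have := (hFiv (u + h) (v + h) (by positivity) (by positivity)).comp_add_right h
    simpa using this
  -- the basic pairing identity over one period
  have hFsum : ∀ t : ℝ, F t + F (t + h) = Real.sin (l * t) * (β (t/ε) - β ((t + h)/ε)) := by
    intro t
    have e : l * (t + h) = l * t + π := by rw [mul_add, hlh]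
    rw [hF]; simp only [e, Real.sin_add_pi]; ring
  have hpair : ∀ a : ℝ, 0 ≤ a →
      (∫ t in a..(a + 2*h), F t) = ∫ t in a..(a + h), (F t + F (t + h)) := by
    intro a ha
    have h1 : (∫ t in a..(a + h), F t) + (∫ t in (a + h)..(a + 2*h), F t)
        = ∫ t in a..(a + 2*h), F t :=
      intervalIntegral.integral_add_adjacent_intervals
        (hFiv a (a + h) ha (by positivity))
        (hFiv (a + h) (a + 2*h) (by positivity) (by positivity))
    have h2 : (∫ t in (a + h)..(a + 2*h), F t) = ∫ t in a..(a + h), F (t + h) := by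
      rw [intervalIntegral.integral_comp_add_right (fun t => F t) h]
      congr 1; ring
    rw [← h1, h2,
      intervalIntegral.integral_add (hFiv a (a + h) ha (by positivity))
        (hFsh a (a + h) ha (by positivity))]
  -- each full period beyond the first contributes nonnegatively
  have hper : ∀ m : ℕ, 0 ≤ ∫ t in (2*((m:ℝ)+1)*h)..(2*((m:ℝ)+1)*h + 2*h), F t := by
    intro m
    have ha : (0:ℝ) ≤ 2*((m:ℝ)+1)*h := by positivity
    rw [hpair _ ha]
    apply intervalIntegral.integral_nonneg (by linarith)
    intro t ht
    obtain ⟨ht1, ht2⟩ := ht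
    have ht0 : 0 < t := lt_of_lt_of_le (by positivity) ht1
    rw [hFsum t]
    apply mul_nonneg
    · have e1 : l * t = (l * t - ((m:ℝ)+1) * (2*π)) + ((m+1 : ℕ):ℝ) * (2*π) := by
        push_cast; ring
      rw [e1, Real.sin_add_nat_mul_two_pi]
      apply Real.sin_nonneg_of_nonneg_of_le_pi
      · nlinarith [hlh, hl0]
      · nlinarith [hlh, hl0]
    · have hd : t/ε ≤ (t + h)/ε := by
        gcongr
        linarith
      exact sub_nonneg.mpr (hmono _ _ (by positivity) hd)
  -- the tail integral is nonnegative
  have htail : 0 ≤ ∫ t in Set.Ioi (2*h), F t := by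
    set G : ℕ → ℝ := fun n => ∫ t in (2*h)..(2*((n:ℝ)+1)*h), F t with hG
    have hG0 : ∀ n, 0 ≤ G n := by
      intro n
      induction n with
      | zero => simp [hG]
      | succ n ih =>
        have hadj : G n + (∫ t in (2*((n:ℝ)+1)*h)..(2*((n:ℝ)+1)*h + 2*h), F t)
            = G (n+1) := by
          rw [hG]
          have := intervalIntegral.integral_add_adjacent_intervals
            (hFiv (2*h) (2*((n:ℝ)+1)*h) (by positivity) (by positivity))
            (hFiv (2*((n:ℝ)+1)*h) (2*((n:ℝ)+1)*h + 2*h) (by positivity) (by positivity))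
          rw [this]
          congr 1
          push_cast; ring
        rw [← hadj]
        have := hper n
        linarith
    have h2h0 : (0:ℝ) ≤ 2*h := by positivity
    have tailint : IntegrableOn F (Set.Ioi (2*h)) :=
      hFint.mono_set (Set.Ioi_subset_Ioi h2h0)
    have t0 : Tendsto (fun n : ℕ => ((n:ℝ)+1)) atTop atTop :=
      tendsto_atTop_add_const_right atTop 1 tendsto_natCast_atTop_atTop
    have t1 : Tendsto (fun n : ℕ => ((n:ℝ)+1)*(2*h)) atTop atTop :=
      t0.atTop_mul_const (by positivity)
    have tu : Tendsto (fun n : ℕ => 2*((n:ℝ)+1)*h) atTop atTop :=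
      t1.congr (fun n => by ring)
    have hGt := intervalIntegral_tendsto_integral_Ioi (2*h) tailint tu
    exact ge_of_tendsto' hGt hG0
  -- split the integral at 2h
  have hsplit : (∫ t in Set.Ioi (0:ℝ), F t)
      = (∫ t in (0:ℝ)..(2*h), F t) + ∫ t in Set.Ioi (2*h), F t := by
    rw [intervalIntegral.integral_of_le (by positivity)]
    rw [← setIntegral_union (Set.Ioc_disjoint_Ioi le_rfl) measurableSet_Ioi
      (hFint.mono_set Set.Ioc_subset_Ioi_self)
      (hFint.mono_set (Set.Ioi_subset_Ioi (by positivity)))]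
    rw [Set.Ioc_union_Ioi_eq_Ioi (by positivity)]
  -- lower bound function on (0,h)
  set Glow : ℝ → ℝ := fun t => Real.sin (l*t) * (Km * (t/ε)^k - Kp * ((t+h)/ε)^k) with hGlow
  have hint2 : IntegrableOn (fun t => Real.sin (l*t) * (Kp * ((t+h)/ε)^k)) (Set.Ioo 0 h) := by
    have c2 : ContinuousOn (fun t => Real.sin (l*t) * (Kp * ((t+h)/ε)^k)) (Set.Icc 0 h) := by
      apply ContinuousOn.mul
      · exact (Real.continuous_sin.comp (continuous_const.mul continuous_id)).continuousOn
      · apply ContinuousOn.mul continuousOn_const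
        apply ContinuousOn.rpow_const
        · exact ((continuous_id.add continuous_const).div_const ε).continuousOn
        · intro t ht
          left
          exact ne_of_gt (div_pos (by nlinarith [ht.1, hh]) hε)
    exact (c2.integrableOn_Icc).mono_set Set.Ioo_subset_Icc_self
  have hint1 : IntegrableOn (fun t => Real.sin (l*t) * (Km * (t/ε)^k)) (Set.Ioo 0 h) := by
    have hmaj : IntegrableOn (fun t => (l * Km * (ε^k)⁻¹) * t^(1+k)) (Set.Ioo 0 h) := by
      have h1 : IntervalIntegrable (fun x : ℝ => x^(1+k)) volume 0 h :=
        intervalIntegral.intervalIntegrable_rpow' (by linarith)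
      exact (h1.1.mono_set Set.Ioo_subset_Ioc_self).const_mul _
    refine Integrable.mono' hmaj ?_ ?_
    · have cont1 : ContinuousOn (fun t => Real.sin (l*t) * (Km * (t/ε)^k)) (Set.Ioo 0 h) := by
        apply ContinuousOn.mul
        · exact (Real.continuous_sin.comp (continuous_const.mul continuous_id)).continuousOn
        · apply ContinuousOn.mul continuousOn_const
          apply ContinuousOn.rpow_const
          · exact (continuous_id.div_const ε).continuousOn
          · intro t ht
            left
            exact ne_of_gt (div_pos ht.1 hε)
      exact cont1.aestronglyMeasurable measurableSet_Ioo
    · refine (ae_restrict_iff' measurableSet_Ioo).mpr (ae_of_all _ fun t ht => ?_)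
      obtain ⟨ht0, hth⟩ := ht
      have hrp : (0:ℝ) < (t/ε)^k := Real.rpow_pos_of_pos (div_pos ht0 hε) k
      have e : t^(1+k) = t * t^k := by
        rw [Real.rpow_add ht0, Real.rpow_one]
      have ediv : (t/ε)^k = t^k * (ε^k)⁻¹ := by
        rw [Real.div_rpow ht0.le hε.le, div_eq_mul_inv]
      calc ‖Real.sin (l*t) * (Km * (t/ε)^k)‖
          = |Real.sin (l*t)| * (Km * (t/ε)^k) := by
            rw [norm_mul, Real.norm_eq_abs, Real.norm_eq_abs,
              abs_of_nonneg (by positivity : (0:ℝ) ≤ Km * (t/ε)^k)]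
        _ ≤ (l*t) * (Km * (t/ε)^k) := by
            apply mul_le_mul_of_nonneg_right _ (by positivity)
            calc |Real.sin (l*t)| ≤ |l*t| := Real.abs_sin_le_abs
              _ = l*t := abs_of_nonneg (by positivity)
        _ = (l * Km * (ε^k)⁻¹) * t^(1+k) := by
            rw [e, ediv]; ring
  have hGlowint : IntegrableOn Glow (Set.Ioo 0 h) := by
    refine (hint1.sub hint2).congr (ae_of_all _ fun t => ?_)
    simp only [hGlow, Pi.sub_apply]
    ring
  have hFsumint : IntegrableOn (fun t => F t + F (t+h)) (Set.Ioo 0 h) :=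
    (((hFiv 0 h le_rfl hh.le).add (hFsh 0 h le_rfl hh.le)).1).mono_set Set.Ioo_subset_Ioc_self
  have hcomp : (∫ t in Set.Ioo 0 h, Glow t) ≤ ∫ t in Set.Ioo 0 h, (F t + F (t+h)) := by
    apply setIntegral_mono_on hGlowint hFsumint measurableSet_Ioo
    intro t ht
    obtain ⟨ht0, hth⟩ := ht
    rw [hFsum t]
    show Real.sin (l*t) * (Km * (t/ε)^k - Kp * ((t+h)/ε)^k)
        ≤ Real.sin (l*t) * (β (t/ε) - β ((t+h)/ε))
    have hsin : 0 ≤ Real.sin (l*t) := by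
      apply Real.sin_nonneg_of_nonneg_of_le_pi (by positivity)
      nlinarith [hlh, hl0]
    apply mul_le_mul_of_nonneg_left _ hsin
    apply sub_le_sub
    · exact hlow _ (by positivity) (by rw [div_lt_iff₀ hε]; nlinarith)
    · exact hhigh _ (by positivity) (by rw [div_lt_iff₀ hε]; nlinarith)
  -- evaluation of the lower-bound integral by the substitution t = h*u
  have hval : (∫ t in Set.Ioo 0 h, Glow t) = h * ((h/ε)^k * c) := by
    have e2 : (∫ u in (0:ℝ)..1, Glow (h*u)) = (h/ε)^k * c := by
      rw [intervalIntegral.integral_of_le zero_le_one, integral_Ioc_eq_integral_Ioo, hc,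
        ← integral_const_mul]
      apply setIntegral_congr_fun measurableSet_Ioo
      intro u hu
      obtain ⟨hu0, hu1⟩ := hu
      show Real.sin (l*(h*u)) * (Km * ((h*u)/ε)^k - Kp * ((h*u+h)/ε)^k)
          = (h/ε)^k * (Real.sin (π*u) * (Km * u^k - Kp * (u+1)^k))
      have eargs : l * (h*u) = π * u := by rw [← mul_assoc, hlh]
      have ed1 : (h*u)/ε = (h/ε)*u := by ring
      have ed2 : ((h*u)+h)/ε = (h/ε)*(u+1) := by ring
      rw [eargs, ed1, ed2, Real.mul_rpow (by positivity) hu0.le,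
        Real.mul_rpow (by positivity) (by linarith)]
      ring
    have e1 : (∫ u in (0:ℝ)..1, Glow (h*u)) = h⁻¹ • ∫ x in (h*0)..(h*1), Glow x :=
      intervalIntegral.integral_comp_mul_left Glow (ne_of_gt hh)
    rw [mul_zero, mul_one, smul_eq_mul] at e1
    have e0 : (∫ t in Set.Ioo 0 h, Glow t) = ∫ t in (0:ℝ)..h, Glow t := by
      rw [intervalIntegral.integral_of_le hh.le, integral_Ioc_eq_integral_Ioo]
    rw [e0]
    have : (∫ x in (0:ℝ)..h, Glow x) = h * ((h/ε)^k * c) := by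
      rw [← e2, e1, ← mul_assoc, mul_inv_cancel₀ (ne_of_gt hh), one_mul]
    exact this
  -- head bound
  have hhead : h * ((h/ε)^k * c) ≤ ∫ t in (0:ℝ)..(2*h), F t := by
    have e : (∫ t in (0:ℝ)..(2*h), F t) = ∫ t in Set.Ioo 0 h, (F t + F (t+h)) := by
      have hp := hpair 0 le_rfl
      rw [zero_add, zero_add] at hp
      rw [hp, intervalIntegral.integral_of_le hh.le, integral_Ioc_eq_integral_Ioo]
    rw [e, ← hval]
    exact hcomp
  have key : h * ((h/ε)^k * c) ≤ ∫ t in Set.Ioi (0:ℝ), F t := by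
    rw [hsplit]; linarith
  -- rewrite S in terms of F
  have hSval : S ε ξ = 2 * ((∫ t in Set.Ioi (0:ℝ), F t) / (ε^2*α₁)) := by
    rw [hS ε ξ]
    congr 1
    rw [← integral_div]
    have hpt : ∀ t : ℝ, Real.sin (2*π*ξ*t) * (β (t/ε)/(ε^2*α₁)) = F t / (ε^2*α₁) := by
      intro t
      show _ = Real.sin (l*t) * β (t/ε) / (ε^2*α₁)
      rw [hl, mul_div_assoc]
    simp only [hpt]
  have hεne : ε ≠ 0 := ne_of_gt hε
  have hξne : ξ ≠ 0 := ne_of_gt hξ0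
  have hα₁ne : α₁ ≠ 0 := ne_of_gt hα₁pos
  -- the exact constant identity
  have hhε : h/ε = (2*ξ*ε)⁻¹ := by
    rw [hhdef]; field_simp
  have e3 : ((2*ξ*ε)⁻¹ : ℝ)^k = 2^(-k) * (ξ^(-k) * ε^(-k)) := by
    rw [Real.inv_rpow (by positivity), ← Real.rpow_neg (by positivity),
      Real.mul_rpow (by positivity) hε.le, Real.mul_rpow (by norm_num) hξ0.le, mul_assoc]
  have e4 : ε^(-2-k:ℝ) = (ε^2)⁻¹ * ε^(-k) := by
    rw [show (-2-k:ℝ) = -2 + -k by ring, Real.rpow_add hε]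
    congr 1
    rw [Real.rpow_neg hε.le]
    norm_num
  have e5 : ξ^(-1-k:ℝ) = ξ⁻¹ * ξ^(-k) := by
    rw [show (-1-k:ℝ) = -1 + -k by ring, Real.rpow_add hξ0, Real.rpow_neg_one]
  have heq : C' * ε^(-2-k:ℝ) * ξ^(-1-k:ℝ) = 2 * ((h * ((h/ε)^k * c)) / (ε^2*α₁)) := by
    rw [hC', e4, e5, hhε, e3, hhdef]
    field_simp
  constructor
  · calc C' * ε^(-2-k:ℝ) * ξ^(-1-k:ℝ)
        = 2 * ((h * ((h/ε)^k * c)) / (ε^2*α₁)) := heq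
      _ ≤ 2 * ((∫ t in Set.Ioi (0:ℝ), F t) / (ε^2*α₁)) := by
          gcongr
      _ = S ε ξ := hSval.symm
  · have hC'pos : 0 < C' := by rw [hC']; positivity
    exact mul_pos (mul_pos hC'pos (Real.rpow_pos_of_pos hε _)) (Real.rpow_pos_of_pos hξ0 _)
end

section
/- Let α(s) = sgn(s)·β(|s|) with β : (0,∞) → [0,∞) nonincreasing, min(s,1)·β(s) integrable on (0,∞), and α₁ := 2∫₀^∞ s·β(s) ds ∈ (0,∞). Assume the bounded-kernel flatness condition: β₀ := lim_{s→0⁺} β(s) < ∞, and there exist b > 0, k > 0, and K₋ ≥ K₊ > 0 with −K₋·s^k ≤ β(s) − β₀ ≤ −K₊·s^k for all s ∈ (0,b), and c := ∫₀¹ sin(πu)·(K₊·(u+1)^k − K₋·u^k) du > 0. Then for every ε > 0 and every ξ ≥ 1/(εb): S_ε(ξ) ≥ (c·2^{−k}/α₁)·ε^{−2−k}·ξ^{−1−k} > 0. (Far-field lower bound, bounded-kernel case.) -/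
open MeasureTheory Real Set Filter Topology intervalIntegral

/-- Key oscillation lemma: the improper sine integral of a nonneg nonincreasing
integrable function is bounded below by its first half-period block. -/
theorem tail_lower (g : ℝ → ℝ) (hg0 : ∀ t, 0 < t → 0 ≤ g t)
    (hganti : ∀ s t, 0 < s → s ≤ t → g t ≤ g s)
    (hgint : IntegrableOn g (Ioi 0))
    (ω : ℝ) (hω : 0 < ω) :
    (∫ t in (0:ℝ)..(π/ω), Real.sin (ω*t) * (g t - g (t + π/ω)))
      ≤ ∫ t in Ioi (0:ℝ), Real.sin (ω*t) * g t := by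
  set h : ℝ := π / ω with hh_def
  have hh : 0 < h := div_pos Real.pi_pos hω
  have hωh : ω * h = π := by
    rw [hh_def]; field_simp [hω.ne']
  set F : ℝ → ℝ := fun t => Real.sin (ω*t) * g t with hF_def
  have hFmeas : AEStronglyMeasurable F (volume.restrict (Ioi (0:ℝ))) := by
    exact (Real.continuous_sin.comp (continuous_const.mul continuous_id)).aestronglyMeasurable.mul
      hgint.aestronglyMeasurable
  have hFint : IntegrableOn F (Ioi (0:ℝ)) := by
    refine hgint.integrable.mono hFmeas ?_
    filter_upwards with t
    simp only [hF_def, norm_mul, Real.norm_eq_abs]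
    calc |Real.sin (ω*t)| * |g t| ≤ 1 * |g t| :=
      mul_le_mul_of_nonneg_right (abs_le.mpr ⟨Real.neg_one_le_sin _, Real.sin_le_one _⟩) (abs_nonneg _)
    _ = |g t| := one_mul _
  have hFii : ∀ a c : ℝ, 0 ≤ a → 0 ≤ c → IntervalIntegrable F volume a c := by
    intro a c ha hc
    rw [intervalIntegrable_iff]
    refine hFint.mono_set fun x hx => ?_
    exact lt_of_le_of_lt (le_min ha hc) hx.1
  have hFshift : ∀ t : ℝ, F t + F (t + h) = Real.sin (ω*t) * (g t - g (t+h)) := by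
    intro t
    have : Real.sin (ω*(t+h)) = -Real.sin (ω*t) := by
      rw [mul_add, hωh, Real.sin_add_pi]
    simp only [hF_def, this]
    ring
  -- block identity
  have hblock_eq : ∀ a : ℝ, 0 ≤ a →
      (∫ t in a..(a+2*h), F t) = ∫ t in a..(a+h), Real.sin (ω*t) * (g t - g (t+h)) := by
    intro a ha
    have hah : (0:ℝ) ≤ a + h := by positivity
    have hsplit : (∫ t in a..(a+h), F t) + (∫ t in (a+h)..(a+2*h), F t)
        = ∫ t in a..(a+2*h), F t :=
      intervalIntegral.integral_add_adjacent_intervals (hFii _ _ ha hah)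
        (hFii _ _ hah (by positivity))
    have hcomp : (∫ t in (a+h)..(a+2*h), F t) = ∫ t in a..(a+h), F (t + h) := by
      rw [intervalIntegral.integral_comp_add_right (fun t => F t) h]
      congr 1
      ring
    have hshift_ii : IntervalIntegrable (fun t => F (t + h)) volume a (a+h) := by
      have := (hFii (a+h) (a+2*h) hah (by positivity)).comp_add_right h
      simpa using this.mono_set (by
        rw [Set.uIcc_of_le (by linarith), Set.uIcc_of_le (by linarith)]
        apply Set.Icc_subset_Icc <;> linarith)
    calc (∫ t in a..(a+2*h), F t) = ∫ t in a..(a+h), (F t + F (t + h)) := by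
          rw [← hsplit, hcomp, intervalIntegral.integral_add (hFii _ _ ha hah) hshift_ii]
      _ = ∫ t in a..(a+h), Real.sin (ω*t) * (g t - g (t+h)) := by
          apply intervalIntegral.integral_congr
          intro t _
          exact hFshift t
  -- nonnegativity of each block
  have hblock_nonneg : ∀ m : ℕ,
      0 ≤ ∫ t in (2*(m:ℝ)*h)..(2*(m:ℝ)*h+h), Real.sin (ω*t) * (g t - g (t+h)) := by
    intro m
    apply intervalIntegral.integral_nonneg (by linarith)
    intro t ht
    rcases eq_or_lt_of_le ht.1 with heq | hlt
    · have : Real.sin (ω*t) = 0 := by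
        rw [← heq]
        have : ω * (2*(m:ℝ)*h) = 0 + (m:ℤ) * (2*π) := by
          push_cast
          rw [← hωh]; ring
        rw [this, Real.sin_add_int_mul_two_pi, Real.sin_zero]
      simp [this]
    · have htpos : 0 < t := lt_of_le_of_lt (by positivity) hlt
      apply mul_nonneg
      · have hsin : Real.sin (ω*t) = Real.sin (ω*t - (m:ℤ)*(2*π)) := by
          conv_lhs => rw [show ω*t = (ω*t - (m:ℤ)*(2*π)) + (m:ℤ)*(2*π) by ring]
          rw [Real.sin_add_int_mul_two_pi]
        rw [hsin]
        apply Real.sin_nonneg_of_nonneg_of_le_pi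
        · push_cast
          nlinarith [ht.1, hωh, hω.le]
        · push_cast
          nlinarith [ht.2, hωh, hω.le]
      · have := hganti t (t+h) htpos (by linarith)
        linarith
  -- partial sums
  have hB : ∀ m : ℕ, 0 ≤ ∫ t in (2*(m:ℝ)*h)..(2*(((m+1:ℕ)):ℝ)*h), F t := by
    intro m
    have harg : 2*(((m+1:ℕ)):ℝ)*h = 2*(m:ℝ)*h + 2*h := by push_cast; ring
    rw [harg, hblock_eq _ (by positivity)]
    exact hblock_nonneg m
  have hsum : ∀ N : ℕ, 1 ≤ N →
      (∫ t in (0:ℝ)..(2*h), F t) ≤ ∫ t in (0:ℝ)..(2*(N:ℝ)*h), F t := by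
    intro N hN
    have hadj := intervalIntegral.sum_integral_adjacent_intervals
      (a := fun m : ℕ => 2*(m:ℝ)*h) (n := N) (f := F) (μ := volume)
      (fun i _ => hFii _ _ (by positivity) (by positivity))
    beta_reduce at hadj
    have e0 : (∫ t in (0:ℝ)..(2*h), F t)
        = ∫ x in (2*(((0:ℕ)):ℝ)*h)..(2*(((0+1:ℕ)):ℝ)*h), F x := by norm_num
    calc (∫ t in (0:ℝ)..(2*h), F t)
        = ∫ x in (2*(((0:ℕ)):ℝ)*h)..(2*(((0+1:ℕ)):ℝ)*h), F x := e0
      _ ≤ ∑ k ∈ Finset.range N, ∫ x in (2*((k:ℕ):ℝ)*h)..(2*(((k+1:ℕ)):ℝ)*h), F x :=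
          Finset.single_le_sum (fun m _ => hB m) (Finset.mem_range.mpr hN)
      _ = ∫ x in (2*(((0:ℕ)):ℝ)*h)..(2*((N:ℕ):ℝ)*h), F x := hadj
      _ = ∫ t in (0:ℝ)..(2*(N:ℝ)*h), F t := by norm_num
  -- pass to the limit
  have hlim : Tendsto (fun N : ℕ => ∫ t in (0:ℝ)..(2*(N:ℝ)*h), F t) atTop
      (𝓝 (∫ t in Ioi (0:ℝ), F t)) := by
    apply MeasureTheory.intervalIntegral_tendsto_integral_Ioi 0 hFint
    have : Tendsto (fun N : ℕ => (N:ℝ) * (2*h)) atTop atTop :=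
      Tendsto.atTop_mul_const (by positivity) tendsto_natCast_atTop_atTop
    refine this.congr fun N => by ring
  have hfinal : (∫ t in (0:ℝ)..(2*h), F t) ≤ ∫ t in Ioi (0:ℝ), F t := by
    apply ge_of_tendsto hlim
    filter_upwards [eventually_ge_atTop 1] with N hN using hsum N hN
  have h0 := hblock_eq 0 le_rfl
  rw [zero_add, zero_add] at h0
  rw [← h0]
  exact hfinal

/-- far-field lower bound for the Fourier-sine symbol, bounded
kernel case `-K₋ s^k ≤ β(s) - β₀ ≤ -K₊ s^k` near zero with `k > 0`. -/
theorem stmt_13 (β : ℝ → ℝ) (hnn : ∀ s, 0 < s → 0 ≤ β s)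
    (hmono : ∀ s t, 0 < s → s ≤ t → β t ≤ β s)
    (hint : IntegrableOn (fun s => min s 1 * β s) (Set.Ioi 0))
    (α₁ : ℝ) (hα₁ : α₁ = 2 * ∫ s in Set.Ioi (0:ℝ), s * β s) (hα₁pos : 0 < α₁)
    (β₀ : ℝ) (hβ₀ : Tendsto β (nhdsWithin 0 (Set.Ioi 0)) (nhds β₀))
    (b k Km Kp : ℝ) (hb : 0 < b) (hk : 0 < k)
    (hKp : 0 < Kp) (hKmp : Kp ≤ Km)
    (hlow : ∀ s, 0 < s → s < b → -Km * s ^ k ≤ β s - β₀)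
    (hhigh : ∀ s, 0 < s → s < b → β s - β₀ ≤ -Kp * s ^ k)
    (c : ℝ)
    (hc : c = ∫ u in Set.Ioo (0:ℝ) 1, Real.sin (π * u) * (Kp * (u + 1) ^ k - Km * u ^ k))
    (hcpos : 0 < c)
    (S : ℝ → ℝ → ℝ)
    (hS : ∀ ε ξ, S ε ξ =
      2 * ∫ t in Set.Ioi (0:ℝ), Real.sin (2 * π * ξ * t) * (β (t / ε) / (ε ^ 2 * α₁)))
    (ε : ℝ) (hε : 0 < ε) (ξ : ℝ) (hξ : 1 / (ε * b) ≤ ξ) :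
    (c * (2:ℝ) ^ (-k) / α₁) * ε ^ (-2 - k) * ξ ^ (-1 - k) ≤ S ε ξ ∧
    0 < (c * (2:ℝ) ^ (-k) / α₁) * ε ^ (-2 - k) * ξ ^ (-1 - k) := by
  have hεb : 0 < ε * b := by positivity
  have hξpos : 0 < ξ := lt_of_lt_of_le (by positivity) hξ
  -- target is positive
  have hgoal2 : 0 < (c * (2:ℝ) ^ (-k) / α₁) * ε ^ (-2 - k) * ξ ^ (-1 - k) := by
    have h1 : (0:ℝ) < (2:ℝ) ^ (-k) := Real.rpow_pos_of_pos (by norm_num) _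
    have h2 : (0:ℝ) < ε ^ (-2 - k) := Real.rpow_pos_of_pos hε _
    have h3 : (0:ℝ) < ξ ^ (-1 - k) := Real.rpow_pos_of_pos hξpos _
    positivity
  refine ⟨?_, hgoal2⟩
  -- β is bounded by β₀ on (0, ∞)
  have hβle : ∀ s, 0 < s → β s ≤ β₀ := by
    intro s hs
    refine ge_of_tendsto hβ₀ ?_
    filter_upwards [Ioo_mem_nhdsGT_of_mem (Set.mem_Ico.mpr ⟨le_rfl, hs⟩)] with t ht
    exact hmono t s ht.1 ht.2.le
  -- measurability of β on (0, ∞)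
  have hβmeas : AEMeasurable β (volume.restrict (Ioi (0:ℝ))) :=
    aemeasurable_restrict_of_antitoneOn measurableSet_Ioi
      (fun s hs t _ hst => hmono s t hs hst)
  -- β is integrable on (0, ∞)
  have hβint : IntegrableOn β (Ioi (0:ℝ)) := by
    have h1 : IntegrableOn β (Ioc (0:ℝ) 1) := by
      refine Integrable.mono' (integrable_const β₀)
        ((hβmeas.mono_measure (Measure.restrict_mono Ioc_subset_Ioi_self le_rfl)).aestronglyMeasurable) ?_
      rw [ae_restrict_iff' measurableSet_Ioc]
      filter_upwards with s hs
      rw [Real.norm_eq_abs, abs_of_nonneg (hnn s hs.1)]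
      exact hβle s hs.1
    have h2 : IntegrableOn β (Ioi (1:ℝ)) := by
      have heq : EqOn (fun s : ℝ => min s 1 * β s) β (Ioi (1:ℝ)) := by
        intro s hs
        have h1 : min s 1 = 1 := by
          apply min_eq_right
          exact le_of_lt hs
        simp [h1]
      exact (hint.mono_set (Ioi_subset_Ioi (zero_le_one (α := ℝ)))).congr_fun heq measurableSet_Ioi
    exact (Set.Ioc_union_Ioi_eq_Ioi (zero_le_one (α := ℝ))) ▸ h1.union h2
  -- the rescaled kernel
  set g : ℝ → ℝ := fun t => β (t * ε⁻¹) with hg_def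
  have hεinv : 0 < ε⁻¹ := inv_pos.mpr hε
  have hgint : IntegrableOn g (Ioi (0:ℝ)) := by
    have := (integrableOn_Ioi_comp_mul_right_iff β 0 hεinv).mpr
    rw [zero_mul] at this
    exact this hβint
  have hg0 : ∀ t, 0 < t → 0 ≤ g t := fun t ht => hnn _ (by positivity)
  have hganti : ∀ s t, 0 < s → s ≤ t → g t ≤ g s := fun s t hs hst =>
    hmono _ _ (by positivity) (by gcongr)
  set ω : ℝ := 2*π*ξ with hω_def
  have hωpos : 0 < ω := by positivity
  have key := tail_lower g hg0 hganti hgint ω hωpos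
  set h : ℝ := π/ω with hhdef
  have hhpos : 0 < h := by positivity
  have hωh : ω * h = π := by rw [hhdef]; field_simp [hωpos.ne']
  have hh2ξ : h = 1/(2*ξ) := by
    rw [hhdef, hω_def]
    rw [div_eq_div_iff (by positivity) (by positivity)]
    ring
  have h2h : 2*h ≤ ε*b := by
    rw [hh2ξ]
    rw [div_le_iff₀ hεb] at hξ
    rw [mul_one_div, div_le_iff₀ (by positivity)]
    nlinarith
  have hεk : (0:ℝ) < ε ^ k := Real.rpow_pos_of_pos hε k
  have hkcont : Continuous (fun t : ℝ => t ^ k) :=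
    continuous_iff_continuousAt.mpr fun x => Real.continuousAt_rpow_const x k (Or.inr hk.le)
  set φ : ℝ → ℝ := fun t => Real.sin (ω*t) * (Kp/ε^k*(t+h)^k - Km/ε^k*t^k) with hφ_def
  have hφcont : Continuous φ := by
    apply Continuous.mul
    · exact Real.continuous_sin.comp (continuous_const.mul continuous_id)
    · exact (continuous_const.mul (hkcont.comp (continuous_id.add continuous_const))).sub
        (continuous_const.mul hkcont)
  -- pointwise comparison on [0, h]
  have hpt : ∀ t ∈ Icc (0:ℝ) h, φ t ≤ Real.sin (ω*t) * (g t - g (t+h)) := by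
    intro t ht
    rcases eq_or_lt_of_le ht.1 with h0 | h0
    · have hz : Real.sin (ω*t) = 0 := by rw [← h0, mul_zero, Real.sin_zero]
      simp [hφ_def, hz]
    rcases eq_or_lt_of_le ht.2 with h1 | h1
    · have hz : Real.sin (ω*t) = 0 := by rw [h1, hωh, Real.sin_pi]
      simp [hφ_def, hz]
    have hsin : 0 ≤ Real.sin (ω*t) := by
      apply Real.sin_nonneg_of_nonneg_of_le_pi
      · positivity
      · rw [← hωh]
        exact mul_le_mul_of_nonneg_left h1.le hωpos.le
    have hs1 : (0:ℝ) < t * ε⁻¹ := by positivity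
    have hs1b : t * ε⁻¹ < b := by
      rw [← div_eq_mul_inv, div_lt_iff₀ hε]
      nlinarith
    have hs2 : (0:ℝ) < (t+h) * ε⁻¹ := by positivity
    have hs2b : (t+h) * ε⁻¹ < b := by
      rw [← div_eq_mul_inv, div_lt_iff₀ hε]
      nlinarith
    have hl := hlow _ hs1 hs1b
    have hh2 := hhigh _ hs2 hs2b
    have e1 : (t * ε⁻¹) ^ k = t ^ k / ε ^ k := by
      rw [Real.mul_rpow ht.1 hεinv.le, Real.inv_rpow hε.le, div_eq_mul_inv]
    have e2 : ((t+h) * ε⁻¹) ^ k = (t+h) ^ k / ε ^ k := by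
      rw [Real.mul_rpow (by positivity) hεinv.le, Real.inv_rpow hε.le, div_eq_mul_inv]
    rw [e1] at hl
    rw [e2] at hh2
    have hcmp : Kp/ε^k*(t+h)^k - Km/ε^k*t^k ≤ g t - g (t+h) := by
      have hgg : g t - g (t+h) = (β (t*ε⁻¹) - β₀) - (β ((t+h)*ε⁻¹) - β₀) := by
        simp only [hg_def]
        ring
      rw [hgg]
      calc Kp/ε^k*(t+h)^k - Km/ε^k*t^k
          = -Km*(t^k/ε^k) - (-Kp*((t+h)^k/ε^k)) := by ring
        _ ≤ _ := sub_le_sub hl hh2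
    exact mul_le_mul_of_nonneg_left hcmp hsin
  -- interval integrability of the oscillating integrand
  have hFint : IntegrableOn (fun t => Real.sin (ω*t) * g t) (Ioi (0:ℝ)) := by
    refine hgint.integrable.mono ?_ ?_
    · exact (Real.continuous_sin.comp
        (continuous_const.mul continuous_id)).aestronglyMeasurable.mul
        hgint.aestronglyMeasurable
    · filter_upwards with t
      simp only [norm_mul, Real.norm_eq_abs]
      exact (mul_le_mul_of_nonneg_right
        (abs_le.mpr ⟨Real.neg_one_le_sin _, Real.sin_le_one _⟩) (abs_nonneg _)).trans_eq
        (one_mul _)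
  have hii1 : IntervalIntegrable (fun t => Real.sin (ω*t) * g t) volume 0 h := by
    rw [intervalIntegrable_iff]
    refine hFint.mono_set fun x hx => ?_
    exact lt_of_le_of_lt (le_min le_rfl hhpos.le) hx.1
  have hFh : IntervalIntegrable (fun t => Real.sin (ω*(t+h)) * g (t+h)) volume 0 h := by
    have base : IntervalIntegrable (fun t => Real.sin (ω*t) * g t) volume h (2*h) := by
      rw [intervalIntegrable_iff]
      refine hFint.mono_set fun x hx => ?_
      exact lt_of_le_of_lt (le_min hhpos.le (by positivity)) hx.1
    have hthis := base.comp_add_right h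
    have e1 : h - h = 0 := by ring
    have e2 : 2*h - h = h := by ring
    rw [e1, e2] at hthis
    exact hthis
  have hii2 : IntervalIntegrable (fun t => Real.sin (ω*t) * g (t+h)) volume 0 h := by
    have hfe : (fun t => Real.sin (ω*t) * g (t+h))
        = fun t => -(Real.sin (ω*(t+h)) * g (t+h)) := by
      funext t
      rw [mul_add, hωh, Real.sin_add_pi]
      ring
    rw [hfe]
    exact hFh.neg
  have hii3 : IntervalIntegrable (fun t => Real.sin (ω*t) * (g t - g (t+h))) volume 0 h := by
    have hfe : (fun t => Real.sin (ω*t) * (g t - g (t+h)))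
        = fun t => Real.sin (ω*t) * g t - Real.sin (ω*t) * g (t+h) := by
      funext t; ring
    rw [hfe]
    exact hii1.sub hii2
  have step1 : (∫ t in (0:ℝ)..h, φ t) ≤ ∫ t in (0:ℝ)..h, Real.sin (ω*t) * (g t - g (t+h)) :=
    intervalIntegral.integral_mono_on hhpos.le (hφcont.intervalIntegrable _ _) hii3 hpt
  -- substitution t = x·h
  have hsub : ∫ x in (0:ℝ)..1, φ (x*h) = h⁻¹ • ∫ x in (0:ℝ)..h, φ x := by
    have hthis := intervalIntegral.integral_comp_mul_right (a := (0:ℝ)) (b := 1) φ hhpos.ne'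
    simpa using hthis
  have hφh : EqOn (fun x => φ (x*h))
      (fun x => (h^k/ε^k) * (Real.sin (π*x) * (Kp*(x+1)^k - Km*x^k))) (uIcc (0:ℝ) 1) := by
    intro x hx
    rw [uIcc_of_le zero_le_one] at hx
    have hx0 : 0 ≤ x := hx.1
    have e0 : ω*(x*h) = π*x := by rw [show ω*(x*h) = (ω*h)*x by ring, hωh]
    have e1 : (x*h + h) ^ k = (x+1)^k * h^k := by
      rw [show x*h + h = (x+1)*h by ring, Real.mul_rpow (by linarith) hhpos.le]
    have e2 : (x*h) ^ k = x^k * h^k := Real.mul_rpow hx0 hhpos.le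
    simp only [hφ_def, e0, e1, e2]
    ring
  have step2 : (∫ x in (0:ℝ)..1, φ (x*h)) = (h^k/ε^k) * c := by
    rw [intervalIntegral.integral_congr hφh, intervalIntegral.integral_const_mul]
    congr 1
    rw [hc, intervalIntegral.integral_of_le zero_le_one,
      MeasureTheory.integral_Ioc_eq_integral_Ioo]
  have hJ : (∫ x in (0:ℝ)..h, φ x) = h * ((h^k/ε^k) * c) := by
    rw [← step2, hsub, smul_eq_mul]
    field_simp
  -- rewrite S
  have hSval : S ε ξ = 2 * ((∫ t in Ioi (0:ℝ), Real.sin (ω*t) * g t) / (ε^2*α₁)) := by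
    rw [hS]
    congr 1
    have hfe : (fun t => Real.sin (2*π*ξ*t) * (β (t/ε) / (ε^2*α₁)))
        = fun t => (Real.sin (ω*t) * g t)/(ε^2*α₁) := by
      funext t
      simp only [hg_def, hω_def, div_eq_mul_inv]
      ring
    rw [hfe, MeasureTheory.integral_div]
  have hineq : h * ((h^k/ε^k) * c) ≤ ∫ t in Ioi (0:ℝ), Real.sin (ω*t) * g t := by
    rw [← hJ]
    exact le_trans step1 key
  -- final algebra
  have p0 : ε ^ ((2:ℝ)) = ε^2 := by
    rw [show ((2:ℝ)) = ((2:ℕ):ℝ) by norm_num, Real.rpow_natCast]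
  have p1 : ε ^ (-2-k) = (ε^2 * ε^k)⁻¹ := by
    rw [show (-2-k:ℝ) = -(2+k) by ring, Real.rpow_neg hε.le, Real.rpow_add hε, p0]
  have p2 : ξ ^ (-1-k) = (ξ * ξ^k)⁻¹ := by
    rw [show (-1-k:ℝ) = -(1+k) by ring, Real.rpow_neg hξpos.le, Real.rpow_add hξpos,
      Real.rpow_one]
  have p3 : (2:ℝ)^(-k) = ((2:ℝ)^k)⁻¹ := Real.rpow_neg (by norm_num) k
  have p4 : h^k = ((2:ℝ)^k * ξ^k)⁻¹ := by
    rw [hh2ξ, one_div, Real.inv_rpow (by positivity), Real.mul_rpow (by norm_num) hξpos.le]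
  have h2k : (0:ℝ) < (2:ℝ)^k := Real.rpow_pos_of_pos (by norm_num) k
  have hξk : (0:ℝ) < ξ^k := Real.rpow_pos_of_pos hξpos k
  have final : (c * (2:ℝ) ^ (-k) / α₁) * ε ^ (-2 - k) * ξ ^ (-1 - k)
      = 2 * ((h * ((h^k/ε^k) * c)) / (ε^2*α₁)) := by
    rw [p3, p1, p2, p4, hh2ξ]
    field_simp
  rw [hSval, final]
  gcongr
end

section
/- Let α(s) = sgn(s)·β(|s|) with β : (0,∞) → [0,∞) measurable, and assume α₁ = 2∫₀^∞ s·β(s) ds and α₃ = 2∫₀^∞ s³·β(s) ds are finite with α₁ > 0. Then for every fixed ξ ∈ ℝ, S_ε(ξ) → 2πξ as ε → 0⁺. (Pointwise convergence of the Fourier symbol of the nonlocal derivative to the symbol 2πξ of d/dt.) -/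
open MeasureTheory Real Set Filter

lemma sin_slope_tendsto (c : ℝ) :
    Tendsto (fun ε : ℝ => Real.sin (c * ε) / ε) (nhdsWithin 0 (Set.Ioi 0)) (nhds c) := by
  have h : HasDerivAt (fun ε : ℝ => Real.sin (c * ε)) c 0 := by
    have := (Real.hasDerivAt_sin (c * 0)).comp 0 ((hasDerivAt_id (0:ℝ)).const_mul c)
    simpa [Function.comp_def] using this
  have h2 := hasDerivAt_iff_tendsto_slope.mp h
  have heq : (slope (fun ε : ℝ => Real.sin (c * ε)) 0)
      = fun ε : ℝ => Real.sin (c * ε) / ε := by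
    funext x
    simp [slope_fun_def, mul_zero, Real.sin_zero, sub_zero, div_eq_inv_mul]
  rw [heq] at h2
  exact h2.mono_left (nhdsWithin_mono _ (fun x hx => ne_of_gt hx))

/-- pointwise convergence of the Fourier-sine symbol of the
nonlocal derivative to the symbol `2πξ` of `d/dt` as `ε → 0⁺`. -/
theorem stmt_14 (β : ℝ → ℝ) (hβmeas : Measurable β) (hnn : ∀ s, 0 < s → 0 ≤ β s)
    (hint1 : IntegrableOn (fun s => s * β s) (Set.Ioi 0))
    (hint3 : IntegrableOn (fun s => s ^ 3 * β s) (Set.Ioi 0))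
    (α₁ : ℝ) (hα₁ : α₁ = 2 * ∫ s in Set.Ioi (0:ℝ), s * β s) (hα₁pos : 0 < α₁)
    (ξ : ℝ) :
    Tendsto (fun ε : ℝ =>
        2 * ∫ t in Set.Ioi (0:ℝ), Real.sin (2 * π * ξ * t) * (β (t / ε) / (ε ^ 2 * α₁)))
      (nhdsWithin 0 (Set.Ioi 0)) (nhds (2 * π * ξ)) := by
  set I1 := ∫ s in Set.Ioi (0:ℝ), s * β s with hI1def
  have hI1pos : 0 < I1 := by linarith [hα₁pos, hα₁]
  set F : ℝ → ℝ → ℝ := fun ε s => Real.sin (2 * π * ξ * (ε * s)) * β s * (2 / (ε * α₁))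
    with hF
  have hmain : Tendsto (fun ε : ℝ => ∫ s in Set.Ioi (0:ℝ), F ε s)
      (nhdsWithin 0 (Set.Ioi 0)) (nhds (2 * π * ξ)) := by
    have hlimint : (∫ s in Set.Ioi (0:ℝ),
        (2 * π * ξ * (2 / α₁)) * (s * β s)) = 2 * π * ξ := by
      rw [MeasureTheory.integral_const_mul, ← hI1def, hα₁]
      have : I1 ≠ 0 := ne_of_gt hI1pos
      field_simp
    rw [← hlimint]
    apply tendsto_integral_filter_of_dominated_convergence
      (bound := fun s => (2 * π * |ξ| * (2 / α₁)) * (s * β s))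
    · filter_upwards [self_mem_nhdsWithin] with ε hε
      apply Measurable.aestronglyMeasurable
      exact ((Real.measurable_sin.comp ((measurable_id.const_mul ε).const_mul
        (2 * π * ξ))).mul hβmeas).mul_const _
    · filter_upwards [self_mem_nhdsWithin] with ε (hε : (0:ℝ) < ε)
      rw [MeasureTheory.ae_restrict_iff' measurableSet_Ioi]
      filter_upwards with s (hs : (0:ℝ) < s)
      have hβs := hnn s hs
      have h1 : |Real.sin (2 * π * ξ * (ε * s))| ≤ |2 * π * ξ| * (ε * s) := by
        calc |Real.sin (2 * π * ξ * (ε * s))| ≤ |2 * π * ξ * (ε * s)| :=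
              Real.abs_sin_le_abs
          _ = |2 * π * ξ| * (ε * s) := by
              rw [abs_mul, abs_of_pos (mul_pos hε hs)]
      have hc : (0:ℝ) ≤ 2 / (ε * α₁) := by positivity
      have hnorm : ‖F ε s‖ = |Real.sin (2 * π * ξ * (ε * s))| * β s * (2 / (ε * α₁)) := by
        rw [hF, Real.norm_eq_abs, abs_mul, abs_mul, abs_of_nonneg hβs, abs_of_nonneg hc]
      rw [hnorm]
      have hkey : (|2 * π * ξ| * (ε * s)) * β s * (2 / (ε * α₁))
          = (2 * π * |ξ|) * (2 / α₁) * (s * β s) := by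
        rw [abs_mul, abs_of_pos (by positivity : (0:ℝ) < 2 * π)]
        field_simp
      calc |Real.sin (2 * π * ξ * (ε * s))| * β s * (2 / (ε * α₁))
          ≤ (|2 * π * ξ| * (ε * s)) * β s * (2 / (ε * α₁)) :=
            mul_le_mul_of_nonneg_right (mul_le_mul_of_nonneg_right h1 hβs) hc
        _ = 2 * π * |ξ| * (2 / α₁) * (s * β s) := hkey
    · exact hint1.const_mul _
    · filter_upwards with s
      have h := (sin_slope_tendsto (2 * π * ξ * s)).mul
        (tendsto_const_nhds (x := β s * (2 / α₁)))
      have heq : ∀ ε : ℝ, (Real.sin (2 * π * ξ * s * ε) / ε) * (β s * (2 / α₁))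
          = F ε s := by
        intro ε
        rw [hF]
        simp only []
        rw [show 2 * π * ξ * s * ε = 2 * π * ξ * (ε * s) by ring]
        ring
      rw [show (2 * π * ξ * (2 / α₁)) * (s * β s)
          = 2 * π * ξ * s * (β s * (2 / α₁)) by ring]
      exact Tendsto.congr heq h
  apply hmain.congr'
  filter_upwards [self_mem_nhdsWithin] with ε (hε : (0:ℝ) < ε)
  have hεne : ε ≠ 0 := ne_of_gt hε
  set g : ℝ → ℝ := fun s => Real.sin (2 * π * ξ * (ε * s)) * (β s / (ε ^ 2 * α₁)) with hg
  have h1 : (fun t : ℝ => Real.sin (2 * π * ξ * t) * (β (t / ε) / (ε ^ 2 * α₁)))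
      = fun t => g (t * ε⁻¹) := by
    funext t
    rw [hg]
    simp only []
    rw [show ε * (t * ε⁻¹) = t by field_simp, ← div_eq_mul_inv]
  have hcv := integral_comp_mul_right_Ioi g 0 (inv_pos.mpr hε)
  simp only [inv_inv, zero_mul, smul_eq_mul] at hcv
  have h2 : (fun s => F ε s) = fun s => (2 * ε) * g s := by
    funext s
    rw [hF, hg]
    simp only []
    field_simp
  rw [h2, MeasureTheory.integral_const_mul, h1, hcv]
  ring
end

section
/- Let α(s) = sgn(s)·β(|s|) with β : (0,∞) → [0,∞) nonincreasing, min(s,1)·β(s) integrable on (0,∞), and α₁ := 2∫₀^∞ s·β(s) ds ∈ (0,∞). Assume the singular flatness condition: there exist b > 0, k ∈ (−2,0), and K₋, K₊ > 0 with K₋·s^k ≤ β(s) ≤ K₊·s^k for all s ∈ (0,b), and c := ∫₀¹ sin(πu)·(K₋·u^k − K₊·(u+1)^k) du > 0; set C′ := c·2^{−k}/α₁. Then for every ε > 0 and every ξ ≥ 1/(εb): S_ε(ξ) > 0 and 2π/S_ε(ξ) − 1/ξ ≤ (2π/C′)·ε^{2+k}·ξ^{1+k} − 1/ξ. (Far-field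 bound on the deviation of the nonlocal antiderivative's Fourier multiplier from the classical multiplier 1/ξ.) -/
open MeasureTheory Real Set Filter

section Aux

variable (β : ℝ → ℝ)

/-- Integrability of `t ↦ sin (l*t) * β (t/ε)` on `Ioi 0`. -/
lemma aux_int_g (hnn : ∀ s, 0 < s → 0 ≤ β s)
    (hmono : ∀ s t, 0 < s → s ≤ t → β t ≤ β s)
    (hint : IntegrableOn (fun s => min s 1 * β s) (Set.Ioi 0))
    (l ε : ℝ) (hl : 0 < l) (hε : 0 < ε) :
    IntegrableOn (fun t => Real.sin (l * t) * β (t / ε)) (Set.Ioi 0) := by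
  have hβanti : AntitoneOn (fun t => β (t / ε)) (Set.Ioi 0) := by
    intro s hs t ht hst
    exact hmono _ _ (div_pos hs hε) (by gcongr)
  have hβm : AEMeasurable (fun t => β (t / ε)) (volume.restrict (Set.Ioi 0)) :=
    aemeasurable_restrict_of_antitoneOn measurableSet_Ioi hβanti
  have hgm : AEStronglyMeasurable (fun t => Real.sin (l * t) * β (t / ε))
      (volume.restrict (Set.Ioi 0)) :=
    ((Real.measurable_sin.comp (measurable_const.mul measurable_id)).aemeasurable.mul
      hβm).aestronglyMeasurable
  set F : ℝ → ℝ := (Set.Ioi (0:ℝ)).indicator (fun s => min s 1 * β s) with hF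
  have hFint : Integrable F := by
    rw [hF, integrable_indicator_iff measurableSet_Ioi]
    exact hint
  have hFc : Integrable (fun t => max (l * ε) 1 * F (t / ε)) :=
    ((hFint.comp_div (ne_of_gt hε))).const_mul _
  refine Integrable.mono' hFc.integrableOn hgm ?_
  filter_upwards [ae_restrict_mem measurableSet_Ioi] with t ht
  have ht' : (0:ℝ) < t := ht
  have hts : 0 < t / ε := div_pos ht' hε
  have hFval : F (t / ε) = min (t / ε) 1 * β (t / ε) :=
    Set.indicator_of_mem (Set.mem_Ioi.mpr hts) _
  rw [hFval]
  have hβnn : 0 ≤ β (t / ε) := hnn _ hts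
  have hsin : ‖Real.sin (l * t)‖ ≤ min (l * t) 1 := by
    refine le_min ?_ ?_
    · calc ‖Real.sin (l * t)‖ = |Real.sin (l * t)| := rfl
        _ ≤ |l * t| := Real.abs_sin_le_abs
        _ = l * t := abs_of_pos (mul_pos hl ht')
    · exact abs_le.mpr ⟨Real.neg_one_le_sin _, Real.sin_le_one _⟩
  have hmin : min (l * t) 1 ≤ max (l * ε) 1 * min (t / ε) 1 := by
    rcases le_total (t / ε) 1 with h | h
    · rw [min_eq_left h]
      calc min (l * t) 1 ≤ l * t := min_le_left _ _
        _ = (l * ε) * (t / ε) := by field_simp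
        _ ≤ max (l * ε) 1 * (t / ε) := by
            exact mul_le_mul_of_nonneg_right (le_max_left _ _) hts.le
    · rw [min_eq_right h]
      calc min (l * t) 1 ≤ 1 := min_le_right _ _
        _ = 1 * 1 := by ring
        _ ≤ max (l * ε) 1 * 1 := by
            exact mul_le_mul_of_nonneg_right (le_max_right _ _) zero_le_one
  calc ‖Real.sin (l * t) * β (t / ε)‖ = ‖Real.sin (l * t)‖ * β (t / ε) := by
        rw [norm_mul]; rw [Real.norm_eq_abs (β (t/ε)), abs_of_nonneg hβnn]
    _ ≤ min (l * t) 1 * β (t / ε) := mul_le_mul_of_nonneg_right hsin hβnn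
    _ ≤ (max (l * ε) 1 * min (t / ε) 1) * β (t / ε) := mul_le_mul_of_nonneg_right hmin hβnn
    _ = max (l * ε) 1 * (min (t / ε) 1 * β (t / ε)) := by ring

/-- Integrability of the shifted function on a bounded interval. -/
lemma aux_int_trans (hnn : ∀ s, 0 < s → 0 ≤ β s)
    (hmono : ∀ s t, 0 < s → s ≤ t → β t ≤ β s)
    (l ε d a B : ℝ) (hε : 0 < ε) (hd : 0 < d) (ha : 0 ≤ a) :
    IntegrableOn (fun t => Real.sin (l * t) * β ((t + d) / ε)) (Set.Ioc a B) := by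
  have hβanti : AntitoneOn (fun t => β ((t + d) / ε)) (Set.Ioc a B) := by
    intro s hs t ht hst
    refine hmono _ _ (div_pos (by linarith [hs.1]) hε) (by gcongr)
  have hβm : AEMeasurable (fun t => β ((t + d) / ε)) (volume.restrict (Set.Ioc a B)) :=
    aemeasurable_restrict_of_antitoneOn measurableSet_Ioc hβanti
  have hgm : AEStronglyMeasurable (fun t => Real.sin (l * t) * β ((t + d) / ε))
      (volume.restrict (Set.Ioc a B)) :=
    ((Real.measurable_sin.comp (measurable_const.mul measurable_id)).aemeasurable.mul
      hβm).aestronglyMeasurable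
  refine Integrable.mono' (integrable_const (β (d / ε))) hgm ?_
  filter_upwards [ae_restrict_mem measurableSet_Ioc] with t ht
  have htd : 0 < (t + d) / ε := div_pos (by linarith [ht.1]) hε
  have hβnn : 0 ≤ β ((t + d) / ε) := hnn _ htd
  calc ‖Real.sin (l * t) * β ((t + d) / ε)‖
      = |Real.sin (l * t)| * β ((t + d) / ε) := by
        rw [norm_mul, Real.norm_eq_abs, Real.norm_eq_abs, abs_of_nonneg hβnn]
    _ ≤ 1 * β ((t + d) / ε) := mul_le_mul_of_nonneg_right
        (abs_le.mpr ⟨Real.neg_one_le_sin _, Real.sin_le_one _⟩) hβnn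
    _ = β ((t + d) / ε) := one_mul _
    _ ≤ β (d / ε) := hmono _ _ (div_pos hd hε) (by gcongr; linarith [ht.1])

/-- The one-period reflection identity. -/
lemma aux_period (hnn : ∀ s, 0 < s → 0 ≤ β s)
    (hmono : ∀ s t, 0 < s → s ≤ t → β t ≤ β s)
    (hint : IntegrableOn (fun s => min s 1 * β s) (Set.Ioi 0))
    (l ε H : ℝ) (hl : 0 < l) (hε : 0 < ε) (hH : 0 < H) (hlH : l * H = π)
    (a : ℝ) (ha : 0 ≤ a) :
    ∫ x in a..(a + 2*H), Real.sin (l * x) * β (x / ε)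
      = ∫ x in a..(a + H), Real.sin (l * x) * (β (x / ε) - β ((x + H) / ε)) := by
  have hg := aux_int_g β hnn hmono hint l ε hl hε
  have hii : ∀ u v : ℝ, 0 ≤ u → u ≤ v →
      IntervalIntegrable (fun t => Real.sin (l * t) * β (t / ε)) volume u v := by
    intro u v hu huv
    rw [intervalIntegrable_iff_integrableOn_Ioc_of_le huv]
    exact hg.mono_set (fun x hx => lt_of_le_of_lt hu hx.1)
  have hii2 : IntervalIntegrable (fun t => Real.sin (l * t) * β ((t + H) / ε))
      volume a (a + H) := by
    rw [intervalIntegrable_iff_integrableOn_Ioc_of_le (by linarith)]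
    exact aux_int_trans β hnn hmono l ε H a (a + H) hε hH ha
  have hsplit : ∫ x in a..(a + 2*H), Real.sin (l * x) * β (x / ε)
      = (∫ x in a..(a + H), Real.sin (l * x) * β (x / ε))
        + ∫ x in (a + H)..(a + 2*H), Real.sin (l * x) * β (x / ε) := by
    rw [intervalIntegral.integral_add_adjacent_intervals (hii a (a+H) ha (by linarith))
      (hii (a+H) (a+2*H) (by linarith) (by linarith))]
  have hshift : ∫ x in (a + H)..(a + 2*H), Real.sin (l * x) * β (x / ε)
      = - ∫ x in a..(a + H), Real.sin (l * x) * β ((x + H) / ε) := by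
    have := intervalIntegral.integral_comp_add_right (a := a) (b := a + H)
      (fun t => Real.sin (l * t) * β (t / ε)) H
    rw [show a + H + H = a + 2*H by ring] at this
    rw [← this, ← intervalIntegral.integral_neg]
    apply intervalIntegral.integral_congr
    intro x hx
    have : l * (x + H) = l * x + π := by rw [mul_add, hlH]
    simp only [this, Real.sin_add_pi]
    ring_nf
  rw [hsplit, hshift, ← sub_eq_add_neg,
    ← intervalIntegral.integral_sub (hii a (a+H) ha (by linarith)) hii2]
  congr 1
  ext x
  ring

end Aux

section Aux2

variable (β : ℝ → ℝ)

/-- Nonnegativity of each full-period integral, for periods beyond the first. -/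
lemma aux_period_nonneg (hnn : ∀ s, 0 < s → 0 ≤ β s)
    (hmono : ∀ s t, 0 < s → s ≤ t → β t ≤ β s)
    (hint : IntegrableOn (fun s => min s 1 * β s) (Set.Ioi 0))
    (l ε H : ℝ) (hl : 0 < l) (hε : 0 < ε) (hH : 0 < H) (hlH : l * H = π) (n : ℕ) :
    0 ≤ ∫ t in Set.Ioc (2*H*(n+1)) (2*H*(n+2)), Real.sin (l * t) * β (t / ε) := by
  set a : ℝ := 2*H*(n+1) with ha_def
  have ha : 0 < a := by positivity
  have h2 : (2*H*(n+2) : ℝ) = a + 2*H := by rw [ha_def]; push_cast; ring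
  rw [h2, ← intervalIntegral.integral_of_le (by linarith : a ≤ a + 2*H)]
  rw [aux_period β hnn hmono hint l ε H hl hε hH hlH a ha.le]
  apply intervalIntegral.integral_nonneg (by linarith : a ≤ a + H)
  intro x hx
  have hxa : a ≤ x := hx.1
  have hxb : x ≤ a + H := hx.2
  have hxpos : 0 < x := lt_of_lt_of_le ha hxa
  have hsin : 0 ≤ Real.sin (l * x) := by
    have hrw : l * x = l * (x - a) + (n + 1 : ℕ) * (2 * π) := by
      have hla : l * a = (n + 1 : ℕ) * (2 * π) := by
        rw [ha_def]; push_cast; nlinarith [hlH]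
      nlinarith [hla]
    rw [hrw, Real.sin_add_nat_mul_two_pi]
    apply Real.sin_nonneg_of_nonneg_of_le_pi
    · nlinarith
    · nlinarith [hlH]
  have hβ : β ((x + H) / ε) ≤ β (x / ε) :=
    hmono _ _ (div_pos hxpos hε) (by gcongr; linarith)
  exact mul_nonneg hsin (by linarith)

/-- Tail nonnegativity. -/
lemma aux_tail (hnn : ∀ s, 0 < s → 0 ≤ β s)
    (hmono : ∀ s t, 0 < s → s ≤ t → β t ≤ β s)
    (hint : IntegrableOn (fun s => min s 1 * β s) (Set.Ioi 0))
    (l ε H : ℝ) (hl : 0 < l) (hε : 0 < ε) (hH : 0 < H) (hlH : l * H = π) :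
    0 ≤ ∫ t in Set.Ioi (2*H), Real.sin (l * t) * β (t / ε) := by
  set T : ℝ := 2*H with hT
  have hTpos : 0 < T := by positivity
  set I : ℕ → Set ℝ := fun n => Set.Ioc (T*(n+1)) (T*(n+2)) with hI
  have hunion : (⋃ n, I n) = Set.Ioi T := by
    ext x
    simp only [Set.mem_iUnion, hI, Set.mem_Ioc, Set.mem_Ioi]
    constructor
    · rintro ⟨n, h1, h2⟩
      have : T ≤ T*(n+1) := by nlinarith [(Nat.cast_nonneg n : (0:ℝ) ≤ n)]
      linarith
    · intro hx
      have hxT : 1 < x / T := (one_lt_div hTpos).mpr hx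
      set m : ℕ := ⌈x / T⌉₊ with hm
      have hm2 : 2 ≤ m := by
        have : 1 < m := Nat.lt_ceil.mpr (by exact_mod_cast hxT)
        omega
      refine ⟨m - 2, ?_, ?_⟩
      · have h1 : (m : ℝ) < x / T + 1 := Nat.ceil_lt_add_one (by positivity)
        have hcast : ((m - 2 : ℕ) : ℝ) = (m : ℝ) - 2 := by
          push_cast [Nat.cast_sub hm2]; ring
        rw [hcast]
        have : (m : ℝ) - 1 < x / T := by linarith
        calc T * ((m:ℝ) - 2 + 1) = T * ((m:ℝ) - 1) := by ring
          _ < T * (x / T) := by exact (mul_lt_mul_iff_right₀ hTpos).mpr this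
          _ = x := by field_simp
      · have h1 : x / T ≤ (m : ℝ) := Nat.le_ceil _
        have hcast : ((m - 2 : ℕ) : ℝ) = (m : ℝ) - 2 := by
          push_cast [Nat.cast_sub hm2]; ring
        rw [hcast]
        calc x = T * (x / T) := by field_simp
          _ ≤ T * (m:ℝ) := by exact (mul_le_mul_iff_right₀ hTpos).mpr h1
          _ = T * ((m:ℝ) - 2 + 2) := by ring
  have hdisj : Pairwise (Function.onFun Disjoint I) := by
    have key : ∀ m n : ℕ, m < n → Disjoint (I m) (I n) := by
      intro m n hmn
      rw [hI]
      rw [Set.Ioc_disjoint_Ioc]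
      have : (m:ℝ) + 2 ≤ (n:ℝ) + 1 := by exact_mod_cast Nat.succ_le_of_lt (by omega)
      have h1 : T*((m:ℝ)+2) ≤ T*((n:ℝ)+1) := by nlinarith
      calc min (T*((m:ℝ)+2)) (T*((n:ℝ)+2)) ≤ T*((m:ℝ)+2) := min_le_left _ _
        _ ≤ T*((n:ℝ)+1) := h1
        _ ≤ max (T*((m:ℝ)+1)) (T*((n:ℝ)+1)) := le_max_right _ _
    intro m n hmn
    rcases hmn.lt_or_gt with h | h
    · exact key m n h
    · exact (key n m h).symm
  have hg := aux_int_g β hnn hmono hint l ε hl hε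
  have hint_union : IntegrableOn (fun t => Real.sin (l * t) * β (t / ε)) (⋃ n, I n) := by
    rw [hunion]
    exact hg.mono_set (fun x hx => lt_trans hTpos hx)
  rw [← hunion, MeasureTheory.integral_iUnion (fun n => measurableSet_Ioc) hdisj hint_union]
  apply tsum_nonneg
  intro n
  exact aux_period_nonneg β hnn hmono hint l ε H hl hε hH hlH n

end Aux2

section Aux3

variable (β : ℝ → ℝ)

/-- Head bound: the first-period integral dominates the comparison integral. -/
lemma aux_head (hnn : ∀ s, 0 < s → 0 ≤ β s)
    (hmono : ∀ s t, 0 < s → s ≤ t → β t ≤ β s)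
    (hint : IntegrableOn (fun s => min s 1 * β s) (Set.Ioi 0))
    (b k Km Kp : ℝ) (hb : 0 < b) (hkl : -2 < k) (hku : k < 0)
    (hKm : 0 < Km) (hKp : 0 < Kp)
    (hlow : ∀ s, 0 < s → s < b → Km * s ^ k ≤ β s)
    (hhigh : ∀ s, 0 < s → s < b → β s ≤ Kp * s ^ k)
    (l ε H : ℝ) (hl : 0 < l) (hε : 0 < ε) (hH : 0 < H) (hlH : l * H = π)
    (hHb : 2 * H ≤ ε * b) :
    (∫ x in (0:ℝ)..H, Real.sin (l * x) * (Km * (x/ε) ^ k - Kp * ((x + H)/ε) ^ k))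
      ≤ ∫ t in Set.Ioc (0:ℝ) (2*H), Real.sin (l * t) * β (t / ε) := by
  have hg := aux_int_g β hnn hmono hint l ε hl hε
  -- rewrite RHS through the period identity
  have h0 : (2*H : ℝ) = 0 + 2*H := by ring
  rw [← intervalIntegral.integral_of_le (by linarith : (0:ℝ) ≤ 2*H), h0,
    aux_period β hnn hmono hint l ε H hl hε hH hlH 0 le_rfl]
  -- interval integrability of the β side
  have hii1 : IntervalIntegrable (fun t => Real.sin (l * t) * β (t / ε)) volume 0 H := by
    rw [intervalIntegrable_iff_integrableOn_Ioc_of_le hH.le]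
    exact hg.mono_set (fun x hx => hx.1)
  have hii2 : IntervalIntegrable (fun t => Real.sin (l * t) * β ((t + H) / ε)) volume 0 H := by
    rw [intervalIntegrable_iff_integrableOn_Ioc_of_le hH.le]
    exact aux_int_trans β hnn hmono l ε H 0 H hε hH le_rfl
  have hiiβ : IntervalIntegrable
      (fun x => Real.sin (l * x) * (β (x / ε) - β ((x + H) / ε))) volume 0 H := by
    have := hii1.sub hii2
    refine this.congr ?_
    intro x _
    simp only [mul_sub]
  -- interval integrability of the comparison side
  have hmeas1 : AEMeasurable (fun x : ℝ => Km * (x/ε) ^ k)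
      (volume.restrict (Set.Ioc 0 H)) := by
    have hanti : AntitoneOn (fun x : ℝ => Km * (x/ε) ^ k) (Set.Ioc 0 H) := by
      intro s hs t ht hst
      have h1 : (0:ℝ) < s / ε := div_pos hs.1 hε
      have h2 : s / ε ≤ t / ε := by gcongr
      exact mul_le_mul_of_nonneg_left (Real.rpow_le_rpow_of_nonpos h1 h2 hku.le) hKm.le
    exact aemeasurable_restrict_of_antitoneOn measurableSet_Ioc hanti
  have hD1 : IntegrableOn (fun x => Real.sin (l * x) * (Km * (x/ε) ^ k))
      (Set.Ioc 0 H) := by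
    have hdom : IntegrableOn (fun x : ℝ => (l * Km * (ε ^ k)⁻¹) * x ^ (1 + k))
        (Set.Ioc 0 H) :=
      ((intervalIntegral.intervalIntegrable_rpow' (by linarith : (-1:ℝ) < 1 + k)).1).const_mul _
    refine Integrable.mono' hdom
      (((Real.measurable_sin.comp
        (measurable_const.mul measurable_id)).aemeasurable.mul hmeas1).aestronglyMeasurable) ?_
    filter_upwards [ae_restrict_mem measurableSet_Ioc] with x hx
    have hx0 : (0:ℝ) < x := hx.1
    have hxe : (0:ℝ) < x / ε := div_pos hx0 hε
    have hrnn : 0 ≤ Km * (x/ε) ^ k := mul_nonneg hKm.le (Real.rpow_nonneg hxe.le _)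
    have hsin : |Real.sin (l * x)| ≤ l * x := by
      calc |Real.sin (l * x)| ≤ |l * x| := Real.abs_sin_le_abs
        _ = l * x := abs_of_pos (mul_pos hl hx0)
    calc ‖Real.sin (l * x) * (Km * (x/ε) ^ k)‖
        = |Real.sin (l * x)| * (Km * (x/ε) ^ k) := by
          rw [norm_mul, Real.norm_eq_abs, Real.norm_eq_abs, abs_of_nonneg hrnn]
      _ ≤ (l * x) * (Km * (x/ε) ^ k) := mul_le_mul_of_nonneg_right hsin hrnn
      _ = (l * Km * (ε ^ k)⁻¹) * x ^ (1 + k) := by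
          rw [Real.div_rpow hx0.le hε.le, Real.rpow_add hx0, Real.rpow_one]
          field_simp
          
  have hiiD1 : IntervalIntegrable (fun x => Real.sin (l * x) * (Km * (x/ε) ^ k))
      volume 0 H := by
    rw [intervalIntegrable_iff_integrableOn_Ioc_of_le hH.le]; exact hD1
  have hiiD2 : IntervalIntegrable (fun x => Real.sin (l * x) * (Kp * ((x + H)/ε) ^ k))
      volume 0 H := by
    apply ContinuousOn.intervalIntegrable
    apply ContinuousOn.mul
    · exact (Real.continuous_sin.comp (continuous_const.mul continuous_id)).continuousOn
    · apply ContinuousOn.mul continuousOn_const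
      apply ContinuousOn.rpow_const
      · exact ((continuous_id.add continuous_const).div_const ε).continuousOn
      · intro x hx
        rw [Set.uIcc_of_le hH.le] at hx
        exact Or.inl (ne_of_gt (div_pos (by linarith [hx.1]) hε))
  have hiiD : IntervalIntegrable
      (fun x => Real.sin (l * x) * (Km * (x/ε) ^ k - Kp * ((x + H)/ε) ^ k)) volume 0 H := by
    have := hiiD1.sub hiiD2
    refine this.congr ?_
    intro x _
    simp only [mul_sub]
  -- pointwise comparison on [0, H]
  rw [show (0:ℝ) + H = H by ring]
  apply intervalIntegral.integral_mono_on hH.le hiiD hiiβ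
  intro x hx
  rcases eq_or_lt_of_le hx.1 with h0 | h0
  · rw [← h0]
    simp
  rcases eq_or_lt_of_le hx.2 with hH' | hH'
  · rw [hH']
    have : Real.sin (l * H) = 0 := by rw [hlH, Real.sin_pi]
    rw [this]
    simp
  -- interior
  have hsin : 0 ≤ Real.sin (l * x) := by
    apply Real.sin_nonneg_of_nonneg_of_le_pi
    · positivity
    · nlinarith
  have hx1 : (0:ℝ) < x / ε := div_pos h0 hε
  have hx1b : x / ε < b := by
    rw [div_lt_iff₀ hε]
    nlinarith
  have hx2 : (0:ℝ) < (x + H) / ε := div_pos (by linarith) hε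
  have hx2b : (x + H) / ε < b := by
    rw [div_lt_iff₀ hε]
    nlinarith
  have hle1 : Km * (x/ε) ^ k ≤ β (x / ε) := hlow _ hx1 hx1b
  have hle2 : β ((x + H) / ε) ≤ Kp * ((x + H)/ε) ^ k := hhigh _ hx2 hx2b
  exact mul_le_mul_of_nonneg_left (by linarith) hsin

end Aux3

/-- Computation of the comparison integral. -/
lemma aux_calc (k Km Kp c : ℝ)
    (hc : c = ∫ u in Set.Ioo (0:ℝ) 1, Real.sin (π * u) * (Km * u ^ k - Kp * (u + 1) ^ k))
    (ξ ε : ℝ) (hξ : 0 < ξ) (hε : 0 < ε) :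
    ∫ x in (0:ℝ)..(1/(2*ξ)), Real.sin (2*π*ξ * x) *
        (Km * (x/ε) ^ k - Kp * ((x + 1/(2*ξ))/ε) ^ k)
      = (2*ξ)⁻¹ * ((2*ξ*ε) ^ (-k) * c) := by
  set A : ℝ := 2*ξ*ε with hA
  have hApos : 0 < A := by positivity
  set G : ℝ → ℝ := fun u => Real.sin (π * u) * (Km * (u/A) ^ k - Kp * ((u + 1)/A) ^ k)
    with hG
  have hstep1 : ∀ x : ℝ, Real.sin (2*π*ξ * x) *
      (Km * (x/ε) ^ k - Kp * ((x + 1/(2*ξ))/ε) ^ k) = G (2*ξ*x) := by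
    intro x
    rw [hG]
    have e1 : π * (2*ξ*x) = 2*π*ξ*x := by ring
    have e2 : (2*ξ*x)/A = x/ε := by
      rw [hA]; field_simp
    have e3 : (2*ξ*x + 1)/A = (x + 1/(2*ξ))/ε := by
      rw [hA]; field_simp
    simp only [e1, e2, e3]
  have hstep2 : (∫ x in (0:ℝ)..(1/(2*ξ)), G (2*ξ*x)) = (2*ξ)⁻¹ * ∫ u in (0:ℝ)..1, G u := by
    have h2ξ : (2*ξ : ℝ) ≠ 0 := by positivity
    have := intervalIntegral.integral_comp_mul_left (a := (0:ℝ)) (b := 1/(2*ξ)) G h2ξ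
    rw [this, smul_eq_mul]
    congr 2
    · ring
    · field_simp
  have hstep3 : (∫ u in (0:ℝ)..1, G u)
      = A ^ (-k) * ∫ u in (0:ℝ)..1, Real.sin (π * u) * (Km * u ^ k - Kp * (u + 1) ^ k) := by
    rw [← intervalIntegral.integral_const_mul]
    apply intervalIntegral.integral_congr
    intro u hu
    rw [Set.uIcc_of_le zero_le_one] at hu
    have hu0 : (0:ℝ) ≤ u := hu.1
    have e1 : (u/A) ^ k = u ^ k * A ^ (-k) := by
      rw [Real.div_rpow hu0 hApos.le, Real.rpow_neg hApos.le, div_eq_mul_inv]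
    have e2 : ((u + 1)/A) ^ k = (u + 1) ^ k * A ^ (-k) := by
      rw [Real.div_rpow (by linarith) hApos.le, Real.rpow_neg hApos.le, div_eq_mul_inv]
    rw [hG]
    simp only [e1, e2]
    ring
  have hstep4 : (∫ u in (0:ℝ)..1, Real.sin (π * u) * (Km * u ^ k - Kp * (u + 1) ^ k)) = c := by
    rw [intervalIntegral.integral_of_le zero_le_one, integral_Ioc_eq_integral_Ioo, hc]
  calc ∫ x in (0:ℝ)..(1/(2*ξ)), Real.sin (2*π*ξ * x) *
        (Km * (x/ε) ^ k - Kp * ((x + 1/(2*ξ))/ε) ^ k)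
      = ∫ x in (0:ℝ)..(1/(2*ξ)), G (2*ξ*x) := by
        apply intervalIntegral.integral_congr; intro x _; exact hstep1 x
    _ = (2*ξ)⁻¹ * ∫ u in (0:ℝ)..1, G u := hstep2
    _ = (2*ξ)⁻¹ * (A ^ (-k) * c) := by rw [hstep3, hstep4]

/-- far-field bound on the deviation of the nonlocal
antiderivative's Fourier multiplier `2π/S_ε(ξ)` from the classical `1/ξ`,
singular kernel case. -/
theorem stmt_16 (β : ℝ → ℝ) (hnn : ∀ s, 0 < s → 0 ≤ β s)
    (hmono : ∀ s t, 0 < s → s ≤ t → β t ≤ β s)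
    (hint : IntegrableOn (fun s => min s 1 * β s) (Set.Ioi 0))
    (α₁ : ℝ) (hα₁ : α₁ = 2 * ∫ s in Set.Ioi (0:ℝ), s * β s) (hα₁pos : 0 < α₁)
    (b k Km Kp : ℝ) (hb : 0 < b) (hkl : -2 < k) (hku : k < 0)
    (hKm : 0 < Km) (hKp : 0 < Kp)
    (hlow : ∀ s, 0 < s → s < b → Km * s ^ k ≤ β s)
    (hhigh : ∀ s, 0 < s → s < b → β s ≤ Kp * s ^ k)
    (c : ℝ)
    (hc : c = ∫ u in Set.Ioo (0:ℝ) 1, Real.sin (π * u) * (Km * u ^ k - Kp * (u + 1) ^ k))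
    (hcpos : 0 < c)
    (C' : ℝ) (hC' : C' = c * (2:ℝ) ^ (-k) / α₁)
    (S : ℝ → ℝ → ℝ)
    (hS : ∀ ε ξ, S ε ξ =
      2 * ∫ t in Set.Ioi (0:ℝ), Real.sin (2 * π * ξ * t) * (β (t / ε) / (ε ^ 2 * α₁)))
    (ε : ℝ) (hε : 0 < ε) (ξ : ℝ) (hξ : 1 / (ε * b) ≤ ξ) :
    0 < S ε ξ ∧
    2 * π / S ε ξ - 1 / ξ ≤ (2 * π / C') * ε ^ (2 + k) * ξ ^ (1 + k) - 1 / ξ := by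
  have hξpos : 0 < ξ := lt_of_lt_of_le (by positivity) hξ
  set l : ℝ := 2 * π * ξ with hl_def
  have hl : 0 < l := by positivity
  set H : ℝ := 1 / (2 * ξ) with hH_def
  have hH : 0 < H := by positivity
  have hlH : l * H = π := by rw [hl_def, hH_def]; field_simp
  have hHb : 2 * H ≤ ε * b := by
    rw [hH_def]
    rw [div_le_iff₀ (by positivity : (0:ℝ) < ε * b)] at hξ
    have h2 : 2 * (1 / (2 * ξ)) = 1 / ξ := by field_simp
    rw [h2, div_le_iff₀ hξpos]
    nlinarith
  -- rewrite S
  have hg := aux_int_g β hnn hmono hint l ε hl hε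
  set I : ℝ := ∫ t in Set.Ioi (0:ℝ), Real.sin (l * t) * β (t / ε) with hI_def
  have hSrw : S ε ξ = 2 * (I * (ε ^ 2 * α₁)⁻¹) := by
    rw [hS, hI_def, ← MeasureTheory.integral_mul_const]
    congr 1
    apply MeasureTheory.integral_congr_ae
    apply Filter.Eventually.of_forall
    intro t
    rw [hl_def]
    ring
  -- split the integral
  have hsplit : I = (∫ t in Set.Ioc (0:ℝ) (2*H), Real.sin (l * t) * β (t / ε))
      + ∫ t in Set.Ioi (2*H), Real.sin (l * t) * β (t / ε) := by
    rw [hI_def, ← MeasureTheory.setIntegral_union (Set.Ioc_disjoint_Ioi le_rfl)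
      measurableSet_Ioi (hg.mono_set Set.Ioc_subset_Ioi_self)
      (hg.mono_set (fun x hx => lt_trans (by positivity : (0:ℝ) < 2*H) hx))]
    rw [Set.Ioc_union_Ioi_eq_Ioi (by positivity : (0:ℝ) ≤ 2*H)]
  -- head and tail bounds
  have htail := aux_tail β hnn hmono hint l ε H hl hε hH hlH
  have hhead := aux_head β hnn hmono hint b k Km Kp hb hkl hku hKm hKp hlow hhigh
    l ε H hl hε hH hlH hHb
  have hQ : (∫ x in (0:ℝ)..H, Real.sin (l * x) * (Km * (x/ε) ^ k - Kp * ((x + H)/ε) ^ k))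
      = (2*ξ)⁻¹ * ((2*ξ*ε) ^ (-k) * c) := by
    rw [hl_def, hH_def]
    exact aux_calc k Km Kp c hc ξ ε hξpos hε
  set Q : ℝ := (2*ξ)⁻¹ * ((2*ξ*ε) ^ (-k) * c) with hQ_def
  have hQpos : 0 < Q := by
    rw [hQ_def]
    have := Real.rpow_pos_of_pos (by positivity : (0:ℝ) < 2*ξ*ε) (-k)
    positivity
  have hIQ : Q ≤ I := by
    rw [hsplit]
    have := hhead
    rw [hQ] at this
    linarith
  have hIpos : 0 < I := lt_of_lt_of_le hQpos hIQ
  have hSpos : 0 < S ε ξ := by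
    rw [hSrw]
    have : (0:ℝ) < (ε ^ 2 * α₁)⁻¹ := by positivity
    positivity
  refine ⟨hSpos, ?_⟩
  -- the key lower bound for S
  set L : ℝ := 2 * (Q * (ε ^ 2 * α₁)⁻¹) with hL_def
  have hLpos : 0 < L := by
    rw [hL_def]
    have : (0:ℝ) < (ε ^ 2 * α₁)⁻¹ := by positivity
    positivity
  have hLS : L ≤ S ε ξ := by
    rw [hSrw, hL_def]
    have : (0:ℝ) < (ε ^ 2 * α₁)⁻¹ := by positivity
    nlinarith
  -- identify L with C' / (ε^(2+k) * ξ^(1+k))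
  have hC'pos : 0 < C' := by
    rw [hC']
    have := Real.rpow_pos_of_pos (by norm_num : (0:ℝ) < 2) (-k)
    positivity
  have hεk := Real.rpow_pos_of_pos hε k
  have hξk := Real.rpow_pos_of_pos hξpos k
  have h2k := Real.rpow_pos_of_pos (by norm_num : (0:ℝ) < 2) k
  have hε2k := Real.rpow_pos_of_pos hε (2+k)
  have hξ1k := Real.rpow_pos_of_pos hξpos (1+k)
  have hLC : L = C' / (ε ^ ((2:ℝ)+k) * ξ ^ ((1:ℝ)+k)) := by
    have e1 : (2*ξ*ε : ℝ) ^ (-k) = ((2:ℝ) ^ k * ξ ^ k * ε ^ k)⁻¹ := by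
      rw [Real.rpow_neg (by positivity), Real.mul_rpow (by positivity) hε.le,
        Real.mul_rpow (by norm_num) hξpos.le]
    have e2 : ε ^ ((2:ℝ)+k) = ε ^ 2 * ε ^ k := by
      rw [Real.rpow_add hε, Real.rpow_two]
    have e3 : ξ ^ ((1:ℝ)+k) = ξ * ξ ^ k := by
      rw [Real.rpow_add hξpos, Real.rpow_one]
    have e4 : (2:ℝ) ^ (-k) = ((2:ℝ) ^ k)⁻¹ := Real.rpow_neg (by norm_num) k
    rw [hL_def, hQ_def, hC', e1, e2, e3, e4]
    field_simp
    
  -- conclude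
  have hfinal : 2 * π / S ε ξ ≤ (2 * π / C') * ε ^ ((2:ℝ) + k) * ξ ^ ((1:ℝ) + k) := by
    have h1 : 2 * π / S ε ξ ≤ 2 * π / L :=
      div_le_div_of_nonneg_left (by positivity) hLpos hLS
    have h2 : 2 * π / L = (2 * π / C') * ε ^ ((2:ℝ) + k) * ξ ^ ((1:ℝ) + k) := by
      rw [hLC]
      field_simp
      
    linarith [h1, h2.le]
  have e5 : ε ^ (2 + k) = ε ^ ((2:ℝ) + k) := by norm_num
  have e6 : ξ ^ (1 + k) = ξ ^ ((1:ℝ) + k) := by norm_num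
  rw [e5, e6]
  linarith
end
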